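/- arXiv:2011.08079 — 10 statements merged into one kernel-verified Lean document; each statement's English description precedes it below -/
import Mathlib

section
/- Let α > 0, b > 0, a ≥ 0, set c² = α² + b² + a⁴, w = √((c² + √(c⁴ − 4α²b²))/(2α²)) and let λ ∈ [0, π/2) be defined by w²cos²λ = (c² − √(c⁴ − 4α²b²))/(2α²). Then the improper integral ∫₀^∞ dz/√(α²z⁴ + c²z² + b²) is finite and equals (1/(αw)) ∫₀^{π/2} dφ/√(1 − sin²λ · sin²φ). In particular, if ∫₀^∞ dz/√(α²z⁴ + c²z² + b²) = π/2, then the complete elliptic integral K(sin²λ) = ∫₀^{π/2} dφ/√(1 − sin²λ sin²φ) satisfies K(sin²λ) = αwπ/2. -/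
open Real MeasureTheory Set

set_option maxHeartbeats 1000000 in
/-- With `α > 0`, `b > 0`, `a ≥ 0`, `c² = α² + b² + a⁴`,
`w = √((c² + √(c⁴ − 4α²b²))/(2α²))` and `λ ∈ [0, π/2)` with
`w²cos²λ = (c² − √(c⁴ − 4α²b²))/(2α²)`, the improper integral
`∫₀^∞ dz/√(α²z⁴ + c²z² + b²)` is finite and equals
`(1/(αw)) ∫₀^{π/2} dφ/√(1 − sin²λ sin²φ)`; in particular if it equals `π/2` then
`K(sin²λ) = αwπ/2`. -/
theorem stmt2 (α b a : ℝ) (hα : 0 < α) (hb : 0 < b) (ha : 0 ≤ a)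
    (c2 : ℝ) (hc2 : c2 = α ^ 2 + b ^ 2 + a ^ 4)
    (w : ℝ) (hw : w = Real.sqrt ((c2 + Real.sqrt (c2 ^ 2 - 4 * α ^ 2 * b ^ 2)) / (2 * α ^ 2)))
    (lam : ℝ) (hlam : lam ∈ Set.Ico (0 : ℝ) (π / 2))
    (hcos : w ^ 2 * Real.cos lam ^ 2 =
      (c2 - Real.sqrt (c2 ^ 2 - 4 * α ^ 2 * b ^ 2)) / (2 * α ^ 2)) :
    IntegrableOn (fun z : ℝ => 1 / Real.sqrt (α ^ 2 * z ^ 4 + c2 * z ^ 2 + b ^ 2))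
      (Set.Ioi 0) ∧
    (∫ z in Set.Ioi (0 : ℝ), 1 / Real.sqrt (α ^ 2 * z ^ 4 + c2 * z ^ 2 + b ^ 2)) =
      (1 / (α * w)) *
        ∫ φ in (0 : ℝ)..(π / 2), 1 / Real.sqrt (1 - Real.sin lam ^ 2 * Real.sin φ ^ 2) ∧
    ((∫ z in Set.Ioi (0 : ℝ), 1 / Real.sqrt (α ^ 2 * z ^ 4 + c2 * z ^ 2 + b ^ 2)) = π / 2 →
      (∫ φ in (0 : ℝ)..(π / 2), 1 / Real.sqrt (1 - Real.sin lam ^ 2 * Real.sin φ ^ 2)) =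
        α * w * π / 2) := by
  have hαne : α ≠ 0 := hα.ne'
  set s := Real.sqrt (c2 ^ 2 - 4 * α ^ 2 * b ^ 2) with hs
  have hc2pos : 0 < c2 := by rw [hc2]; positivity
  have h2ab : 2 * α * b ≤ c2 := by rw [hc2]; nlinarith [sq_nonneg (α - b), sq_nonneg (a ^ 2)]
  have hdisc : 0 ≤ c2 ^ 2 - 4 * α ^ 2 * b ^ 2 := by nlinarith [mul_pos hα hb]
  have hs0 : 0 ≤ s := Real.sqrt_nonneg _
  have hs2 : s ^ 2 = c2 ^ 2 - 4 * α ^ 2 * b ^ 2 := Real.sq_sqrt hdisc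
  have hslt : s < c2 := by nlinarith [mul_pos hα hb]
  have hw2 : w ^ 2 = (c2 + s) / (2 * α ^ 2) := by
    rw [hw]; exact Real.sq_sqrt (by positivity)
  have hwpos : 0 < w := by
    rw [hw]; exact Real.sqrt_pos.2 (by positivity)
  have hcoslam : 0 < Real.cos lam :=
    Real.cos_pos_of_mem_Ioo ⟨by linarith [hlam.1, pi_pos], hlam.2⟩
  set k := w * Real.cos lam with hkdef
  have hkpos : 0 < k := mul_pos hwpos hcoslam
  have hk2 : k ^ 2 = (c2 - s) / (2 * α ^ 2) := by
    rw [hkdef, mul_pow]; exact hcos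
  have hsum : α ^ 2 * (k ^ 2 + w ^ 2) = c2 := by
    rw [hk2, hw2]; field_simp; ring
  have hprod : α ^ 2 * (k ^ 2 * w ^ 2) = b ^ 2 := by
    rw [hk2, hw2]; field_simp; nlinarith [hs2]
  have hsl : Real.sin lam ^ 2 + Real.cos lam ^ 2 = 1 := Real.sin_sq_add_cos_sq lam
  have hYpos : ∀ φ : ℝ, 0 < 1 - Real.sin lam ^ 2 * Real.sin φ ^ 2 := by
    intro φ
    nlinarith [Real.sin_sq_le_one φ, sq_nonneg (Real.sin lam), pow_pos hcoslam 2,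
      sq_nonneg (Real.sin lam * Real.sin φ)]
  set f : ℝ → ℝ := fun φ => k * Real.tan φ with hf
  set f' : ℝ → ℝ := fun φ => k * (1 / Real.cos φ ^ 2) with hf'
  have hderiv : ∀ φ ∈ Ioo (0:ℝ) (π/2), HasDerivWithinAt f (f' φ) (Ioo (0:ℝ) (π/2)) φ := by
    intro φ hφ
    have hcφ : Real.cos φ ≠ 0 :=
      (Real.cos_pos_of_mem_Ioo ⟨by linarith [hφ.1, pi_pos], hφ.2⟩).ne'
    exact ((Real.hasDerivAt_tan hcφ).const_mul k).hasDerivWithinAt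
  have hinj : InjOn f (Ioo (0:ℝ) (π/2)) := by
    intro x hx y hy hxy
    have hsub : Ioo (0:ℝ) (π/2) ⊆ Ioo (-(π/2)) (π/2) := fun t ht =>
      ⟨by linarith [ht.1, pi_pos], ht.2⟩
    exact Real.strictMonoOn_tan.injOn (hsub hx) (hsub hy)
      (mul_left_cancel₀ hkpos.ne' hxy)
  have himg : f '' Ioo (0:ℝ) (π/2) = Ioi (0:ℝ) := by
    ext y
    constructor
    · rintro ⟨φ, hφ, rfl⟩
      exact mul_pos hkpos (Real.tan_pos_of_pos_of_lt_pi_div_two hφ.1 hφ.2)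
    · intro hy
      refine ⟨Real.arctan (y / k), ⟨by simpa [Real.arctan_zero] using Real.arctan_strictMono (div_pos hy hkpos),
        Real.arctan_lt_pi_div_two _⟩, ?_⟩
      simp only [hf, Real.tan_arctan]
      field_simp
  have hkey : ∀ φ ∈ Ioo (0:ℝ) (π/2),
      |f' φ| • (1 / Real.sqrt (α ^ 2 * (f φ) ^ 4 + c2 * (f φ) ^ 2 + b ^ 2)) =
      (1 / (α * w)) * (1 / Real.sqrt (1 - Real.sin lam ^ 2 * Real.sin φ ^ 2)) := by
    intro φ hφ
    have hcφ : 0 < Real.cos φ :=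
      Real.cos_pos_of_mem_Ioo ⟨by linarith [hφ.1, pi_pos], hφ.2⟩
    have hcφne : Real.cos φ ≠ 0 := hcφ.ne'
    have hsc : Real.sin φ ^ 2 + Real.cos φ ^ 2 = 1 := Real.sin_sq_add_cos_sq φ
    have hz : f φ = k * (Real.sin φ / Real.cos φ) := by
      simp only [hf]; rw [Real.tan_eq_sin_div_cos]
    have hYp := hYpos φ
    have h3 : α ^ 2 * (f φ) ^ 4 + c2 * (f φ) ^ 2 + b ^ 2
        = α ^ 2 * (((f φ) ^ 2 + k ^ 2) * ((f φ) ^ 2 + w ^ 2)) := by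
      linear_combination (-(f φ) ^ 2) * hsum - hprod
    have h1 : (f φ) ^ 2 + k ^ 2 = k ^ 2 / Real.cos φ ^ 2 := by
      rw [hz]; field_simp; linear_combination hsc
    have h2 : (f φ) ^ 2 + w ^ 2
        = w ^ 2 * (1 - Real.sin lam ^ 2 * Real.sin φ ^ 2) / Real.cos φ ^ 2 := by
      rw [hz, hkdef]; field_simp
      linear_combination Real.sin φ ^ 2 * hsl + hsc
    have key : α ^ 2 * (f φ) ^ 4 + c2 * (f φ) ^ 2 + b ^ 2
        = (α * k * w / Real.cos φ ^ 2) ^ 2 * (1 - Real.sin lam ^ 2 * Real.sin φ ^ 2) := by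
      rw [h3, h1, h2]; field_simp
    rw [key, Real.sqrt_mul (sq_nonneg _), Real.sqrt_sq (by positivity)]
    have hsY : 0 < Real.sqrt (1 - Real.sin lam ^ 2 * Real.sin φ ^ 2) := Real.sqrt_pos.2 hYp
    have hfp : f' φ = k / Real.cos φ ^ 2 := by simp only [hf']; ring
    rw [hfp, abs_of_pos (by positivity), smul_eq_mul]
    field_simp
  -- continuity of the target integrand
  have hcont : Continuous fun φ : ℝ =>
      (1 / (α * w)) * (1 / Real.sqrt (1 - Real.sin lam ^ 2 * Real.sin φ ^ 2)) := by
    have h1 : Continuous fun φ : ℝ => Real.sqrt (1 - Real.sin lam ^ 2 * Real.sin φ ^ 2) :=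
      (continuous_const.sub (continuous_const.mul (Real.continuous_sin.pow 2))).sqrt
    exact continuous_const.mul
      (continuous_const.div h1 fun x => (Real.sqrt_pos.2 (hYpos x)).ne')
  have hms : MeasurableSet (Ioo (0:ℝ) (π/2)) := measurableSet_Ioo
  have hIoo : IntegrableOn (fun φ : ℝ =>
      (1 / (α * w)) * (1 / Real.sqrt (1 - Real.sin lam ^ 2 * Real.sin φ ^ 2)))
      (Ioo (0:ℝ) (π/2)) := (hcont.integrableOn_Icc).mono_set Set.Ioo_subset_Icc_self
  have hInt2 : IntegrableOn (fun φ => |f' φ| •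
      (1 / Real.sqrt (α ^ 2 * (f φ) ^ 4 + c2 * (f φ) ^ 2 + b ^ 2)))
      (Ioo (0:ℝ) (π/2)) :=
    hIoo.congr_fun (fun x hx => (hkey x hx).symm) hms
  have hiff := integrableOn_image_iff_integrableOn_abs_deriv_smul hms hderiv hinj
    (fun z : ℝ => 1 / Real.sqrt (α ^ 2 * z ^ 4 + c2 * z ^ 2 + b ^ 2))
  rw [himg] at hiff
  have hIntG : IntegrableOn (fun z : ℝ => 1 / Real.sqrt (α ^ 2 * z ^ 4 + c2 * z ^ 2 + b ^ 2))
      (Ioi 0) := hiff.2 hInt2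
  have hIE := integral_image_eq_integral_abs_deriv_smul hms hderiv hinj
    (fun z : ℝ => 1 / Real.sqrt (α ^ 2 * z ^ 4 + c2 * z ^ 2 + b ^ 2))
  rw [himg] at hIE
  have hIE2 : (∫ z in Ioi (0:ℝ), 1 / Real.sqrt (α ^ 2 * z ^ 4 + c2 * z ^ 2 + b ^ 2))
      = ∫ φ in Ioo (0:ℝ) (π/2),
          (1 / (α * w)) * (1 / Real.sqrt (1 - Real.sin lam ^ 2 * Real.sin φ ^ 2)) := by
    rw [hIE]
    exact setIntegral_congr_fun hms hkey
  have hIE3 : (∫ z in Ioi (0:ℝ), 1 / Real.sqrt (α ^ 2 * z ^ 4 + c2 * z ^ 2 + b ^ 2))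
      = (1 / (α * w)) *
        ∫ φ in (0:ℝ)..(π/2), 1 / Real.sqrt (1 - Real.sin lam ^ 2 * Real.sin φ ^ 2) := by
    rw [hIE2, intervalIntegral.integral_of_le (by positivity),
      ← MeasureTheory.integral_Ioc_eq_integral_Ioo, MeasureTheory.integral_const_mul]
  refine ⟨hIntG, hIE3, fun hI => ?_⟩
  rw [hI] at hIE3
  have hαw : α * w ≠ 0 := by positivity
  field_simp at hIE3
  linarith
end

section
/- Let α > 0. For any a ≥ 0 there is a unique constant b_a > 0 such that ∫₀^∞ dz/√(α²z⁴ + (α² + b_a² + a⁴)z² + b_a²) = π/2. Moreover, b_a ≤ max{2α, α⁻¹}. -/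
open Real MeasureTheory Set

noncomputable def Pq (α a b z : ℝ) : ℝ := α ^ 2 * z ^ 4 + (α ^ 2 + b ^ 2 + a ^ 4) * z ^ 2 + b ^ 2

noncomputable def fq (α a b z : ℝ) : ℝ := 1 / Real.sqrt (Pq α a b z)

lemma Pq_pos {α a b : ℝ} (hb : 0 < b) (z : ℝ) : 0 < Pq α a b z := by
  unfold Pq; positivity

lemma fq_cont {α a b : ℝ} (hb : 0 < b) : Continuous (fq α a b) := by
  apply continuous_const.div
  · exact (Real.continuous_sqrt.comp (by unfold Pq; continuity))
  · intro z
    exact (Real.sqrt_pos.mpr (Pq_pos hb z)).ne'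

lemma fq_pos {α a b : ℝ} (hb : 0 < b) (z : ℝ) : 0 < fq α a b z :=
  div_pos one_pos (Real.sqrt_pos.mpr (Pq_pos hb z))

lemma fq_le_inv_b {α a b : ℝ} (hb : 0 < b) (z : ℝ) : fq α a b z ≤ b⁻¹ := by
  rw [fq, one_div]
  rw [inv_le_inv₀ (Real.sqrt_pos.mpr (Pq_pos hb z)) hb]
  have : b = Real.sqrt (b ^ 2) := (Real.sqrt_sq hb.le).symm
  rw [this]
  apply Real.sqrt_le_sqrt
  unfold Pq; nlinarith [sq_nonneg z, sq_nonneg (z^2), sq_nonneg α, sq_nonneg (a^2), sq_nonneg (α*z^2), sq_nonneg (a^2*z), sq_nonneg (b*z)]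

lemma fq_le_inv_az2 {α a b : ℝ} (hα : 0 < α) (hb : 0 < b) {z : ℝ} (hz : 0 < z) :
    fq α a b z ≤ (α * z ^ 2)⁻¹ := by
  rw [fq, one_div]
  rw [inv_le_inv₀ (Real.sqrt_pos.mpr (Pq_pos hb z)) (by positivity)]
  have : α * z ^ 2 = Real.sqrt ((α * z ^ 2) ^ 2) := (Real.sqrt_sq (by positivity)).symm
  rw [this]
  apply Real.sqrt_le_sqrt
  unfold Pq; nlinarith [sq_nonneg z, sq_nonneg (a^2*z), sq_nonneg (b*z), sq_nonneg b]

lemma integrableOn_of_bounds {α b : ℝ} (hα : 0 < α) (hb : 0 < b) {h : ℝ → ℝ}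
    (hc : Continuous h)
    (h0 : ∀ z ∈ Set.Ioi (0:ℝ), 0 ≤ h z) (h1 : ∀ z ∈ Set.Ioi (0:ℝ), h z ≤ b⁻¹)
    (h2 : ∀ z ∈ Set.Ioi (0:ℝ), h z ≤ (α * z ^ 2)⁻¹) :
    IntegrableOn h (Set.Ioi (0:ℝ)) := by
  have hIoc : IntegrableOn h (Set.Ioc (0:ℝ) 1) := by
    apply Integrable.mono' (g := fun _ => b⁻¹) ((integrableOn_const_iff).mpr (Or.inr measure_Ioc_lt_top))
      hc.aestronglyMeasurable.restrict
    refine (ae_restrict_iff' measurableSet_Ioc).mpr (Filter.Eventually.of_forall fun z hz => ?_)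
    rw [Real.norm_eq_abs, abs_of_nonneg (h0 z hz.1)]
    exact h1 z hz.1
  have hIoi : IntegrableOn h (Set.Ioi (1:ℝ)) := by
    apply Integrable.mono' (g := fun z => α⁻¹ * z ^ (-2 : ℝ))
      ((integrableOn_Ioi_rpow_of_lt (by norm_num) one_pos).const_mul α⁻¹)
      hc.aestronglyMeasurable.restrict
    refine (ae_restrict_iff' measurableSet_Ioi).mpr (Filter.Eventually.of_forall fun z hz => ?_)
    have hz0 : (0:ℝ) < z := lt_trans one_pos hz
    rw [Real.norm_eq_abs, abs_of_nonneg (h0 z hz0)]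
    calc h z ≤ (α * z ^ 2)⁻¹ := h2 z hz0
    _ = α⁻¹ * z ^ (-2 : ℝ) := by
        rw [mul_inv, Real.rpow_neg hz0.le, ← Real.rpow_natCast z 2]
        norm_num
  have : Set.Ioc (0:ℝ) 1 ∪ Set.Ioi 1 = Set.Ioi (0:ℝ) := Set.Ioc_union_Ioi_eq_Ioi zero_le_one
  rw [← this]
  exact hIoc.union hIoi

lemma fq_integrableOn {α a b : ℝ} (hα : 0 < α) (hb : 0 < b) :
    IntegrableOn (fq α a b) (Set.Ioi (0:ℝ)) :=
  integrableOn_of_bounds hα hb (fq_cont hb) (fun z _ => (fq_pos hb z).le)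
    (fun z _ => fq_le_inv_b hb z) (fun z hz => fq_le_inv_az2 hα hb hz)

lemma integral_inv_quadratic {α b : ℝ} (hα : 0 < α) (hb : 0 < b) :
    (∫ z in Set.Ioi (0:ℝ), (α * z ^ 2 + b)⁻¹) = π / (2 * Real.sqrt (α * b)) := by
  set c : ℝ := Real.sqrt (α * b) with hc
  have hcpos : 0 < c := Real.sqrt_pos.mpr (by positivity)
  set r : ℝ := Real.sqrt α / Real.sqrt b with hr
  have hsa : (0:ℝ) < Real.sqrt α := Real.sqrt_pos.mpr hα
  have hsb : (0:ℝ) < Real.sqrt b := Real.sqrt_pos.mpr hb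
  have hbb : Real.sqrt b * Real.sqrt b = b := Real.mul_self_sqrt hb.le
  have hcc : c = Real.sqrt α * Real.sqrt b := Real.sqrt_mul hα.le b
  have hrpos : 0 < r := div_pos hsa hsb
  have hrc : c⁻¹ * r = b⁻¹ := by
    rw [hcc, hr, ← hbb]
    field_simp
    rw [Real.sqrt_sq hsb.le]
  set F : ℝ → ℝ := fun z => c⁻¹ * Real.arctan (r * z) with hF
  have hderiv : ∀ z ∈ Set.Ioi (0:ℝ), HasDerivAt F ((α * z ^ 2 + b)⁻¹) z := by
    intro z _
    have h1 : HasDerivAt (fun z : ℝ => r * z) r z := by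
      simpa using (hasDerivAt_id z).const_mul r
    have h2 := (Real.hasDerivAt_arctan (r * z)).comp z h1
    have h3 := h2.const_mul c⁻¹
    refine h3.congr_deriv ?_; symm
    have hr2 : r ^ 2 = α / b := by
      rw [hr, div_pow, Real.sq_sqrt hα.le, Real.sq_sqrt hb.le]
    have hden : 1 + (r * z) ^ 2 = (α * z ^ 2 + b) / b := by
      rw [mul_pow, hr2]; field_simp; ring
    have hpos : 0 < α * z ^ 2 + b := by positivity
    rw [hden, one_div, inv_div,
      show c⁻¹ * (b / (α * z ^ 2 + b) * r) = c⁻¹ * r * (b / (α * z ^ 2 + b)) from by ring,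
      hrc]
    field_simp
  have hint : IntegrableOn (fun z => (α * z ^ 2 + b)⁻¹) (Set.Ioi (0:ℝ)) := by
    apply integrableOn_of_bounds hα hb
    · exact Continuous.inv₀ (by continuity) (fun z => ne_of_gt (by positivity))
    · exact fun z _ => by positivity
    · intro z hz
      exact inv_anti₀ hb (by nlinarith [sq_nonneg z])
    · intro z hz
      have hz' : (0:ℝ) < z := hz
      exact inv_anti₀ (by positivity) (by nlinarith)
  have htend : Filter.Tendsto F Filter.atTop (nhds (c⁻¹ * (π / 2))) := by
    apply Filter.Tendsto.const_mul
    have := Real.tendsto_arctan_atTop.mono_right nhdsWithin_le_nhds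
    exact this.comp (Filter.tendsto_atTop_atTop_of_monotone (fun x y hxy => by nlinarith)
      (fun x => ⟨x / r, by rw [mul_div_cancel₀]; exact hrpos.ne'⟩))
  have hFc : Continuous F :=
    continuous_const.mul (Real.continuous_arctan.comp (continuous_const.mul continuous_id))
  have := integral_Ioi_of_hasDerivAt_of_tendsto
    (f := F) (a := 0) (m := c⁻¹ * (π / 2))
    hFc.continuousWithinAt hderiv hint htend
  rw [this, hF]
  simp only [mul_zero, Real.arctan_zero, sub_zero]
  rw [inv_mul_eq_div, div_eq_div_iff hcpos.ne' (by positivity : (0:ℝ) < 2*c).ne']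
  ring

lemma I_le {α a b : ℝ} (hα : 0 < α) (ha : 0 ≤ a) (hb : 0 < b) :
    (∫ z in Set.Ioi (0:ℝ), fq α a b z) ≤ π / (2 * Real.sqrt (α * b)) := by
  rw [← integral_inv_quadratic hα hb]
  apply setIntegral_mono_on (fq_integrableOn hα hb)
    (integrableOn_of_bounds (h := fun z => (α * z ^ 2 + b)⁻¹) hα hb
      (Continuous.inv₀ (by continuity) (fun z => ne_of_gt (by positivity)))
      (fun z _ => by positivity)
      (fun z hz => inv_anti₀ hb (by nlinarith [sq_nonneg z]))
      (fun z hz => by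
        have hz' : (0:ℝ) < z := hz
        exact inv_anti₀ (by positivity) (by nlinarith)))
    measurableSet_Ioi
  intro z hz
  rw [fq, one_div]
  apply inv_anti₀ (by positivity)
  rw [Real.le_sqrt (by positivity) (Pq_pos hb z).le]
  unfold Pq
  nlinarith [sq_nonneg ((α - b) * z), sq_nonneg (a ^ 2 * z)]

lemma fq_anti {α a b b' : ℝ} (hb : 0 < b) (hbb' : b ≤ b') (z : ℝ) :
    fq α a b' z ≤ fq α a b z := by
  rw [fq, fq, one_div, one_div]
  apply inv_anti₀ (Real.sqrt_pos.mpr (Pq_pos hb z))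
  apply Real.sqrt_le_sqrt
  unfold Pq
  nlinarith [sq_nonneg z, mul_nonneg (sub_nonneg.mpr hbb') (by linarith : (0:ℝ) ≤ b' + b)]

lemma fq_strict_anti {α a b b' : ℝ} (hb : 0 < b) (hbb' : b < b') (z : ℝ) :
    fq α a b' z < fq α a b z := by
  rw [fq, fq, one_div, one_div]
  apply inv_strictAnti₀ (Real.sqrt_pos.mpr (Pq_pos hb z))
  apply Real.sqrt_lt_sqrt (Pq_pos hb z).le
  unfold Pq
  nlinarith [sq_nonneg z, mul_pos (sub_pos.mpr hbb') (by linarith : (0:ℝ) < b' + b)]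

lemma I_strict_anti {α a b b' : ℝ} (hα : 0 < α) (hb : 0 < b) (hbb' : b < b') :
    (∫ z in Set.Ioi (0:ℝ), fq α a b' z) < ∫ z in Set.Ioi (0:ℝ), fq α a b z := by
  have hb' : 0 < b' := hb.trans hbb'
  have hi := fq_integrableOn (a := a) hα hb
  have hi' := fq_integrableOn (a := a) hα hb'
  have hnn : 0 ≤ᵐ[volume.restrict (Set.Ioi (0:ℝ))] (fq α a b - fq α a b') := by
    refine (ae_restrict_iff' measurableSet_Ioi).mpr (Filter.Eventually.of_forall fun z hz => ?_)
    have := fq_anti (α := α) (a := a) hb hbb'.le z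
    simp only [Pi.zero_apply, Pi.sub_apply]
    linarith
  have key := (setIntegral_pos_iff_support_of_nonneg_ae hnn (hi.sub hi')).mpr ?_
  · rw [show (fq α a b - fq α a b') = fun z => fq α a b z - fq α a b' z from rfl,
      integral_sub hi hi'] at key
    linarith
  · have hsub : Set.Ioi (0:ℝ) ⊆
        Function.support (fq α a b - fq α a b') ∩ Set.Ioi 0 := by
      intro z hz
      refine ⟨?_, hz⟩
      simp only [Function.mem_support, Pi.sub_apply]
      exact (sub_pos.mpr (fq_strict_anti hb hbb' z)).ne'
    calc (0:ENNReal) < volume (Set.Ioi (0:ℝ)) := by simp [Real.volume_Ioi]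
    _ ≤ _ := measure_mono hsub

lemma I_lower {α a : ℝ} (hα : 0 < α) (ha : 0 ≤ a) :
    ∃ b₁ : ℝ, 0 < b₁ ∧ π / 2 < ∫ z in Set.Ioi (0:ℝ), fq α a b₁ z := by
  set K : ℝ := 2 * α ^ 2 + 1 + a ^ 4 with hK
  have hKpos : 0 < K := by positivity
  set s : ℝ := Real.sqrt K with hs
  have hs0 : 0 ≤ s := Real.sqrt_nonneg K
  have hs2 : s ^ 2 = K := Real.sq_sqrt hKpos.le
  set b₁ : ℝ := Real.exp (-(π * (s + 1))) with hb₁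
  have hb₁pos : 0 < b₁ := Real.exp_pos _
  have hb₁lt1 : b₁ < 1 := by
    rw [hb₁, Real.exp_lt_one_iff]
    have := Real.pi_pos
    nlinarith
  refine ⟨b₁, hb₁pos, ?_⟩
  have hlogb₁ : Real.log b₁ = -(π * (s + 1)) := Real.log_exp _
  -- pointwise bound on Ioc b₁ 1
  have hpt : ∀ z ∈ Set.Ioc b₁ 1, (s + 1)⁻¹ * z⁻¹ ≤ fq α a b₁ z := by
    intro z hz
    have hz0 : 0 < z := hb₁pos.trans hz.1
    rw [fq, one_div, ← mul_inv]
    apply inv_anti₀ (Real.sqrt_pos.mpr (Pq_pos hb₁pos z))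
    have h1 : Pq α a b₁ z ≤ ((s + 1) * z) ^ 2 := by
      have hb₁z : b₁ ^ 2 ≤ z ^ 2 := by nlinarith [hz.1.le]
      have hz1 : z ^ 2 ≤ 1 := by nlinarith [hz.2]
      have hz4 : z ^ 4 ≤ z ^ 2 := by nlinarith [sq_nonneg z, sq_nonneg (z^2)]
      unfold Pq
      have : ((s + 1) * z) ^ 2 = (K + 2 * s + 1) * z ^ 2 := by rw [mul_pow]; nlinarith [hs2]
      rw [this, hK]
      nlinarith [sq_nonneg z, mul_nonneg hs0 (sq_nonneg z), sq_nonneg a, hb₁lt1]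
    calc Real.sqrt (Pq α a b₁ z) ≤ Real.sqrt (((s + 1) * z) ^ 2) := Real.sqrt_le_sqrt h1
    _ = (s + 1) * z := Real.sqrt_sq (by positivity)
  -- integral of the lower bound
  have hIoc_int : (∫ z in Set.Ioc b₁ 1, (s + 1)⁻¹ * z⁻¹) = π := by
    rw [← intervalIntegral.integral_of_le hb₁lt1.le]
    rw [intervalIntegral.integral_const_mul]
    rw [integral_inv (by
      intro h
      rcases h with h
      have := Set.mem_uIcc.mp h
      rcases this with ⟨h1, _⟩ | ⟨h1, _⟩ <;> linarith)]
    rw [Real.log_div one_ne_zero hb₁pos.ne', Real.log_one, hlogb₁]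
    field_simp
    ring
  have hint_low : IntegrableOn (fun z => (s + 1)⁻¹ * z⁻¹) (Set.Ioc b₁ 1) := by
    apply (ContinuousOn.integrableOn_Icc ?_).mono_set Set.Ioc_subset_Icc_self
    apply ContinuousOn.mul continuousOn_const
    apply ContinuousOn.inv₀ continuousOn_id
    intro z hz
    have : 0 < z := hb₁pos.trans_le hz.1
    exact this.ne'
  have hfq_int := fq_integrableOn (a := a) hα hb₁pos
  have step1 : (∫ z in Set.Ioc b₁ 1, (s + 1)⁻¹ * z⁻¹) ≤ ∫ z in Set.Ioc b₁ 1, fq α a b₁ z := by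
    apply setIntegral_mono_on hint_low
      (hfq_int.mono_set (fun z hz => Set.mem_Ioi.mpr (hb₁pos.trans hz.1)))
      measurableSet_Ioc hpt
  have step2 : (∫ z in Set.Ioc b₁ 1, fq α a b₁ z) ≤ ∫ z in Set.Ioi 0, fq α a b₁ z := by
    apply setIntegral_mono_set hfq_int
    · refine (ae_restrict_iff' measurableSet_Ioi).mpr
        (Filter.Eventually.of_forall fun z hz => (fq_pos hb₁pos z).le)
    · exact HasSubset.Subset.eventuallyLE (fun z hz => Set.mem_Ioi.mpr (hb₁pos.trans hz.1))
  have hπ := Real.pi_pos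
  calc π / 2 < π := by linarith
  _ = ∫ z in Set.Ioc b₁ 1, (s + 1)⁻¹ * z⁻¹ := hIoc_int.symm
  _ ≤ _ := le_trans step1 step2

lemma fq_meas (α a b : ℝ) : AEStronglyMeasurable (fq α a b) (volume.restrict (Set.Ioi (0:ℝ))) := by
  apply Measurable.aestronglyMeasurable
  exact measurable_const.div ((Real.continuous_sqrt.comp (by unfold Pq; continuity)).measurable)

lemma I_contAt {α a b₀ : ℝ} (hα : 0 < α) (hb₀ : 0 < b₀) :
    ContinuousAt (fun b => ∫ z in Set.Ioi (0:ℝ), fq α a b z) b₀ := by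
  apply continuousAt_of_dominated (bound := fq α a (b₀ / 2))
  · exact Filter.Eventually.of_forall fun b => fq_meas α a b
  · refine (lt_mem_nhds (half_lt_self hb₀)).mono fun b hb => ?_
    refine Filter.Eventually.of_forall fun z => ?_
    have hnn : 0 ≤ fq α a b z := by rw [fq]; positivity
    rw [Real.norm_eq_abs, abs_of_nonneg hnn]
    exact fq_anti (half_pos hb₀) hb.le z
  · exact fq_integrableOn hα (half_pos hb₀)
  · refine Filter.Eventually.of_forall fun z => ?_
    show ContinuousAt (fun b => 1 / Real.sqrt (Pq α a b z)) b₀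
    have h1 : ContinuousAt (fun b => Pq α a b z) b₀ := by unfold Pq; fun_prop
    exact continuousAt_const.div ((Real.continuous_sqrt.continuousAt).comp h1)
      (Real.sqrt_pos.mpr (Pq_pos hb₀ z)).ne'

lemma I_lt_of_big {α a b : ℝ} (hα : 0 < α) (ha : 0 ≤ a) (hb : 0 < b) (h1 : 1 < α * b) :
    (∫ z in Set.Ioi (0:ℝ), fq α a b z) < π / 2 := by
  have h2 : 1 < Real.sqrt (α * b) := by
    have := Real.sqrt_lt_sqrt zero_le_one h1
    rwa [Real.sqrt_one] at this
  have hπ := Real.pi_pos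
  calc (∫ z in Set.Ioi (0:ℝ), fq α a b z) ≤ π / (2 * Real.sqrt (α * b)) := I_le hα ha hb
  _ < π / 2 := by
      apply div_lt_div_of_pos_left hπ two_pos
      linarith

/-- For `α > 0` and any `a ≥ 0` there is a unique constant `b_a > 0` with
`∫₀^∞ dz/√(α²z⁴ + (α² + b_a² + a⁴)z² + b_a²) = π/2`; moreover `b_a ≤ max{2α, α⁻¹}`. -/
theorem stmt3 (α : ℝ) (hα : 0 < α) (a : ℝ) (ha : 0 ≤ a) :
    (∃! b : ℝ, 0 < b ∧
      (∫ z in Set.Ioi (0 : ℝ),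
        1 / Real.sqrt (α ^ 2 * z ^ 4 + (α ^ 2 + b ^ 2 + a ^ 4) * z ^ 2 + b ^ 2)) = π / 2) ∧
    ∀ b : ℝ, 0 < b →
      (∫ z in Set.Ioi (0 : ℝ),
        1 / Real.sqrt (α ^ 2 * z ^ 4 + (α ^ 2 + b ^ 2 + a ^ 4) * z ^ 2 + b ^ 2)) = π / 2 →
      b ≤ max (2 * α) α⁻¹ := by
  have hIeq : ∀ b : ℝ,
      (∫ z in Set.Ioi (0 : ℝ),
        1 / Real.sqrt (α ^ 2 * z ^ 4 + (α ^ 2 + b ^ 2 + a ^ 4) * z ^ 2 + b ^ 2))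
      = ∫ z in Set.Ioi (0:ℝ), fq α a b z := fun b => rfl
  constructor
  · -- existence and uniqueness
    obtain ⟨b₁, hb₁pos, hb₁low⟩ := I_lower hα ha
    set b₂ : ℝ := max (2 / α) (b₁ + 1) with hb₂
    have hb₁b₂ : b₁ < b₂ := lt_of_lt_of_le (by linarith) (le_max_right _ _)
    have hb₂pos : 0 < b₂ := hb₁pos.trans hb₁b₂
    have hαb₂ : 1 < α * b₂ := by
      have h2α : 2 / α ≤ b₂ := le_max_left _ _
      have : α * (2 / α) = 2 := by field_simp
      nlinarith
    have hb₂hi : (∫ z in Set.Ioi (0:ℝ), fq α a b₂ z) < π / 2 := I_lt_of_big hα ha hb₂pos hαb₂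
    have hcont : ContinuousOn (fun b => ∫ z in Set.Ioi (0:ℝ), fq α a b z) (Set.Icc b₁ b₂) :=
      fun b hb => (I_contAt hα (hb₁pos.trans_le hb.1)).continuousWithinAt
    have hivt := intermediate_value_Icc' hb₁b₂.le hcont
    have hmem : π / 2 ∈ Set.Icc ((fun b => ∫ z in Set.Ioi (0:ℝ), fq α a b z) b₂)
        ((fun b => ∫ z in Set.Ioi (0:ℝ), fq α a b z) b₁) := ⟨hb₂hi.le, hb₁low.le⟩
    obtain ⟨c, hc_mem, hc_eq⟩ := hivt hmem
    simp only [] at hc_eq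
    have hcpos : 0 < c := hb₁pos.trans_le hc_mem.1
    refine ⟨c, ⟨hcpos, by rw [hIeq]; exact hc_eq⟩, ?_⟩
    have hc_eq' : (∫ z in Set.Ioi (0:ℝ), fq α a c z) = π / 2 := hc_eq
    rintro y ⟨hy_pos, hy_eq⟩
    rw [hIeq] at hy_eq
    rcases lt_trichotomy y c with h | h | h
    · exfalso
      have := I_strict_anti (a := a) hα hy_pos h
      rw [hy_eq, hc_eq'] at this
      exact lt_irrefl _ this
    · exact h
    · exfalso
      have := I_strict_anti (a := a) hα hcpos h
      rw [hy_eq, hc_eq'] at this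
      exact lt_irrefl _ this
  · -- bound
    intro b hb heq
    rw [hIeq] at heq
    by_contra hcon
    push_neg at hcon
    have h1 : α⁻¹ < b := lt_of_le_of_lt (le_max_right (2 * α) α⁻¹) hcon
    have h2 : 1 < α * b := by
      have : α * α⁻¹ = 1 := mul_inv_cancel₀ hα.ne'
      nlinarith
    have := I_lt_of_big hα ha (lt_trans (by positivity) h1) h2
    rw [heq] at this
    exact lt_irrefl _ this
end

section
/- Let α > 0 and for each a ≥ 0 let b_a > 0 be the unique constant with ∫₀^∞ dz/√(α²z⁴ + (α² + b_a² + a⁴)z² + b_a²) = π/2. Then the map a ↦ b_a is continuous on [0, ∞). -/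
open Real MeasureTheory Set

namespace Stmt4Aux

/-- The quartic under the square root. -/
noncomputable def Q (α a b z : ℝ) : ℝ :=
  α ^ 2 * z ^ 4 + (α ^ 2 + b ^ 2 + a ^ 4) * z ^ 2 + b ^ 2

lemma Q_pos (α a b z : ℝ) (hb : 0 < b) : 0 < Q α a b z := by
  have h1 : 0 ≤ α ^ 2 * z ^ 4 := by positivity
  have h2 : 0 ≤ (α ^ 2 + b ^ 2 + a ^ 4) * z ^ 2 := by positivity
  have h3 : 0 < b ^ 2 := by positivity
  unfold Q; linarith

/-- The integrand. -/
noncomputable def f (α a b z : ℝ) : ℝ := 1 / Real.sqrt (Q α a b z)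

lemma f_nonneg (α a b z : ℝ) : 0 ≤ f α a b z := by
  unfold f; positivity

lemma Q_cont (α a b : ℝ) : Continuous fun z => Q α a b z := by
  unfold Q; fun_prop

lemma f_cont (α a b : ℝ) (hb : 0 < b) : Continuous (f α a b) := by
  unfold f
  exact Continuous.div continuous_const (Real.continuous_sqrt.comp (Q_cont α a b))
    (fun z => (Real.sqrt_pos.2 (Q_pos α a b z hb)).ne')

lemma f_le_one_div (α a b z : ℝ) (hb : 0 < b) : f α a b z ≤ 1 / b := by
  apply one_div_le_one_div_of_le hb
  have h : b ^ 2 ≤ Q α a b z := by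
    have h1 : 0 ≤ α ^ 2 * z ^ 4 := by positivity
    have h2 : 0 ≤ (α ^ 2 + b ^ 2 + a ^ 4) * z ^ 2 := by positivity
    unfold Q; linarith
  calc b = Real.sqrt (b ^ 2) := by rw [Real.sqrt_sq hb.le]
  _ ≤ Real.sqrt (Q α a b z) := Real.sqrt_le_sqrt h

lemma f_le_inv_sq (α a b z : ℝ) (hα : 0 < α) (hz : 0 < z) :
    f α a b z ≤ 1 / (α * z ^ 2) := by
  apply one_div_le_one_div_of_le (by positivity)
  have h : (α * z ^ 2) ^ 2 ≤ Q α a b z := by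
    have h2 : 0 ≤ (α ^ 2 + b ^ 2 + a ^ 4) * z ^ 2 := by positivity
    have h3 : 0 ≤ b ^ 2 := by positivity
    unfold Q; nlinarith
  calc α * z ^ 2 = Real.sqrt ((α * z ^ 2) ^ 2) := by rw [Real.sqrt_sq (by positivity)]
  _ ≤ Real.sqrt (Q α a b z) := Real.sqrt_le_sqrt h

/-- The dominating function. -/
noncomputable def g (α b z : ℝ) : ℝ := if z ≤ 1 then 1 / b else 1 / (α * z ^ 2)

lemma g_int (α b : ℝ) (hα : 0 < α) (hb : 0 < b) : IntegrableOn (g α b) (Ioi 0) := by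
  have h1 : IntegrableOn (g α b) (Ioc 0 1) := by
    have hc : IntegrableOn (fun _ : ℝ => 1 / b) (Ioc (0:ℝ) 1) :=
      integrableOn_const measure_Ioc_lt_top.ne
    exact hc.congr_fun (fun z hz => by simp [g, hz.2]) measurableSet_Ioc
  have h2 : IntegrableOn (g α b) (Ioi 1) := by
    have hr : IntegrableOn (fun z : ℝ => z ^ (-2 : ℝ)) (Ioi 1) :=
      integrableOn_Ioi_rpow_of_lt (by norm_num) one_pos
    have h3 : IntegrableOn (fun z : ℝ => α⁻¹ * z ^ (-2 : ℝ)) (Ioi 1) :=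
      hr.const_mul α⁻¹
    refine h3.congr_fun (fun z hz => ?_) measurableSet_Ioi
    have hz1 : (1 : ℝ) < z := hz
    have hz0 : (0 : ℝ) < z := lt_trans one_pos hz1
    simp only [g, if_neg (not_le.2 hz1)]
    rw [Real.rpow_neg hz0.le, show ((2:ℝ)) = ((2:ℕ):ℝ) by norm_num,
      Real.rpow_natCast]
    field_simp
  have hu : Ioc (0:ℝ) 1 ∪ Ioi 1 = Ioi 0 := Ioc_union_Ioi_eq_Ioi zero_le_one
  rw [← hu]
  exact h1.union h2

lemma f_le_g (α a b z : ℝ) (hα : 0 < α) (hb : 0 < b) (hz : 0 < z) :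
    f α a b z ≤ g α b z := by
  unfold g
  split_ifs with h
  · exact f_le_one_div α a b z hb
  · exact f_le_inv_sq α a b z hα hz

lemma f_int (α a b : ℝ) (hα : 0 < α) (hb : 0 < b) : IntegrableOn (f α a b) (Ioi 0) := by
  refine Integrable.mono (g_int α b hα hb)
    ((f_cont α a b hb).aestronglyMeasurable.restrict) ?_
  rw [ae_restrict_iff' measurableSet_Ioi]
  refine ae_of_all _ fun z hz => ?_
  rw [Real.norm_eq_abs, abs_of_nonneg (f_nonneg α a b z), Real.norm_eq_abs]
  calc f α a b z ≤ g α b z := f_le_g α a b z hα hb hz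
  _ ≤ |g α b z| := le_abs_self _

/-- The integral as a function of the parameters. -/
noncomputable def F (α a b : ℝ) : ℝ := ∫ z in Ioi (0:ℝ), f α a b z

lemma F_anti (α a b₁ b₂ : ℝ) (hα : 0 < α) (h1 : 0 < b₁) (h12 : b₁ ≤ b₂) :
    F α a b₂ ≤ F α a b₁ := by
  refine setIntegral_mono_on (f_int α a b₂ hα (h1.trans_le h12)) (f_int α a b₁ hα h1)
    measurableSet_Ioi (fun z hz => ?_)
  apply one_div_le_one_div_of_le (Real.sqrt_pos.2 (Q_pos α a b₁ z h1))
  apply Real.sqrt_le_sqrt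
  have hbb : b₁ ^ 2 ≤ b₂ ^ 2 := by nlinarith
  unfold Q; nlinarith [sq_nonneg z]

lemma F_strict_anti (α a b₁ b₂ : ℝ) (hα : 0 < α) (h1 : 0 < b₁) (h12 : b₁ < b₂) :
    F α a b₂ < F α a b₁ := by
  have h2 : 0 < b₂ := h1.trans h12
  have flt : ∀ z : ℝ, f α a b₂ z < f α a b₁ z := by
    intro z
    apply one_div_lt_one_div_of_lt (Real.sqrt_pos.2 (Q_pos α a b₁ z h1))
    apply Real.sqrt_lt_sqrt (Q_pos α a b₁ z h1).le
    have hbb : b₁ ^ 2 < b₂ ^ 2 := by nlinarith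
    unfold Q; nlinarith [sq_nonneg z]
  have key : 0 < ∫ z in Ioi (0:ℝ), (f α a b₁ z - f α a b₂ z) := by
    rw [setIntegral_pos_iff_support_of_nonneg_ae]
    · refine lt_of_lt_of_le ?_ (measure_mono
        (subset_inter (fun z _ => (sub_pos.2 (flt z)).ne') Subset.rfl))
      simp [Real.volume_Ioi]
    · exact Filter.Eventually.of_forall fun z => sub_nonneg.2 (flt z).le
    · exact (f_int α a b₁ hα h1).sub (f_int α a b₂ hα h2)
  rw [integral_sub (f_int α a b₁ hα h1) (f_int α a b₂ hα h2)] at key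
  unfold F; linarith

lemma F_contAt (α β a₀ : ℝ) (hα : 0 < α) (hβ : 0 < β) :
    ContinuousAt (fun a => F α a β) a₀ := by
  apply continuousAt_of_dominated (bound := g α β)
  · exact Filter.Eventually.of_forall fun a => (f_cont α a β hβ).aestronglyMeasurable.restrict
  · refine Filter.Eventually.of_forall fun a => ?_
    rw [ae_restrict_iff' measurableSet_Ioi]
    refine ae_of_all _ fun z hz => ?_
    rw [Real.norm_eq_abs, abs_of_nonneg (f_nonneg α a β z)]
    exact f_le_g α a β z hα hβ hz
  · exact g_int α β hα hβ
  · refine ae_of_all _ fun z => ?_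
    unfold f
    apply ContinuousAt.div continuousAt_const
    · exact (Real.continuous_sqrt.comp (show Continuous fun a => Q α a β z by
        unfold Q; fun_prop)).continuousAt
    · exact (Real.sqrt_pos.2 (Q_pos α a₀ β z hβ)).ne'

end Stmt4Aux

open Stmt4Aux

/-- For `α > 0`, if for each `a ≥ 0` the constant `b a > 0` satisfies
`∫₀^∞ dz/√(α²z⁴ + (α² + (b a)² + a⁴)z² + (b a)²) = π/2`, then `a ↦ b a` is continuous
on `[0, ∞)`. -/
theorem stmt4 (α : ℝ) (hα : 0 < α) (b : ℝ → ℝ)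
    (hb : ∀ a : ℝ, 0 ≤ a → 0 < b a ∧
      (∫ z in Set.Ioi (0 : ℝ),
        1 / Real.sqrt (α ^ 2 * z ^ 4 + (α ^ 2 + (b a) ^ 2 + a ^ 4) * z ^ 2 + (b a) ^ 2)) =
        π / 2) :
    ContinuousOn b (Set.Ici 0) := by
  have hbF : ∀ a : ℝ, 0 ≤ a → F α a (b a) = π / 2 := by
    intro a ha
    have := (hb a ha).2
    simpa [F, f, Q] using this
  intro a₀ ha₀
  have ha₀' : (0:ℝ) ≤ a₀ := ha₀
  obtain ⟨hb0, _⟩ := hb a₀ ha₀'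
  have hF0 : F α a₀ (b a₀) = π / 2 := hbF a₀ ha₀'
  rw [ContinuousWithinAt, Metric.tendsto_nhds]
  intro ε hε
  set β₁ := b a₀ - min ε (b a₀) / 2 with hβ₁def
  set β₂ := b a₀ + ε / 2 with hβ₂def
  have hmin : 0 < min ε (b a₀) := lt_min hε hb0
  have hβ₁pos : 0 < β₁ := by
    have := min_le_right ε (b a₀); rw [hβ₁def]; linarith
  have hβ₁lt : β₁ < b a₀ := by rw [hβ₁def]; linarith
  have hβ₂gt : b a₀ < β₂ := by rw [hβ₂def]; linarith
  have h1 : π / 2 < F α a₀ β₁ := by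
    rw [← hF0]; exact F_strict_anti α a₀ β₁ (b a₀) hα hβ₁pos hβ₁lt
  have h2 : F α a₀ β₂ < π / 2 := by
    rw [← hF0]; exact F_strict_anti α a₀ (b a₀) β₂ hα hb0 hβ₂gt
  have e1 : ∀ᶠ a in nhds a₀, π / 2 < F α a β₁ :=
    (F_contAt α β₁ a₀ hα hβ₁pos).eventually_const_lt h1
  have e2 : ∀ᶠ a in nhds a₀, F α a β₂ < π / 2 :=
    (F_contAt α β₂ a₀ hα (hb0.trans hβ₂gt)).eventually_lt_const h2
  have e3 : ∀ᶠ a in nhdsWithin a₀ (Set.Ici 0), a ∈ Set.Ici (0:ℝ) :=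
    eventually_mem_nhdsWithin
  filter_upwards [(e1.and e2).filter_mono nhdsWithin_le_nhds, e3] with a ⟨h1a, h2a⟩ haI
  obtain ⟨hba, _⟩ := hb a haI
  have hFa : F α a (b a) = π / 2 := hbF a haI
  have l1 : β₁ < b a := by
    by_contra h
    push_neg at h
    have := F_anti α a (b a) β₁ hα hba h
    rw [hFa] at this
    linarith
  have l2 : b a < β₂ := by
    by_contra h
    push_neg at h
    have := F_anti α a β₂ (b a) hα (hb0.trans hβ₂gt) h
    rw [hFa] at this
    linarith
  rw [Real.dist_eq, abs_lt]
  have hm : min ε (b a₀) ≤ ε := min_le_left _ _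
  constructor
  · rw [hβ₁def] at l1; linarith
  · rw [hβ₂def] at l2; linarith
end

section
/- Let α > 0 and β ≥ 0, and for each a ≥ 0 let b_a > 0 be the unique constant with ∫₀^∞ dz/√(α²z⁴ + (α² + b_a² + a⁴)z² + b_a²) = π/2. Then there exists a = a(α, β) ≥ 0 such that a² ∫₀^∞ dz/((1 + z²)√(α²z⁴ + (α² + b_a² + a⁴)z² + b_a²)) = β/2. -/
open Real MeasureTheory Set Filter

namespace Stmt5Aux

noncomputable def P (α a y z : ℝ) : ℝ := α ^ 2 * z ^ 4 + (α ^ 2 + y ^ 2 + a ^ 4) * z ^ 2 + y ^ 2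

lemma P_pos {α y : ℝ} (hα : 0 < α) (hy : 0 < y) (a z : ℝ) : 0 < P α a y z := by
  unfold P
  nlinarith [sq_nonneg (α * z ^ 2), sq_nonneg (α * z), sq_nonneg (y * z), sq_nonneg (a ^ 2 * z),
    sq_nonneg y]

lemma sqrtP_pos {α y : ℝ} (hα : 0 < α) (hy : 0 < y) (a z : ℝ) :
    0 < Real.sqrt (P α a y z) := Real.sqrt_pos.mpr (P_pos hα hy a z)

lemma sqrtP_ge_y {α y : ℝ} (hy : 0 ≤ y) (a z : ℝ) : y ≤ Real.sqrt (P α a y z) := by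
  have h : y ^ 2 ≤ P α a y z := by
    unfold P
    nlinarith [sq_nonneg (α * z ^ 2), sq_nonneg (α * z), sq_nonneg (y * z), sq_nonneg (a ^ 2 * z)]
  calc y = Real.sqrt (y ^ 2) := by rw [Real.sqrt_sq hy]
  _ ≤ _ := Real.sqrt_le_sqrt h

lemma sqrtP_ge_az2 {α : ℝ} (hα : 0 ≤ α) (a y z : ℝ) : α * z ^ 2 ≤ Real.sqrt (P α a y z) := by
  have h : (α * z ^ 2) ^ 2 ≤ P α a y z := by
    unfold P
    nlinarith [sq_nonneg (α * z), sq_nonneg (y * z), sq_nonneg (a ^ 2 * z), sq_nonneg y]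
  calc α * z ^ 2 = Real.sqrt ((α * z ^ 2) ^ 2) := by
        rw [Real.sqrt_sq (by positivity)]
  _ ≤ _ := Real.sqrt_le_sqrt h

lemma sqrtP_ge_a2z {a z : ℝ} (ha : 0 ≤ a) (hz : 0 ≤ z) (α y : ℝ) :
    a ^ 2 * z ≤ Real.sqrt (P α a y z) := by
  have h : (a ^ 2 * z) ^ 2 ≤ P α a y z := by
    unfold P
    nlinarith [sq_nonneg (α * z ^ 2), sq_nonneg (α * z), sq_nonneg (y * z), sq_nonneg y]
  calc a ^ 2 * z = Real.sqrt ((a ^ 2 * z) ^ 2) := by rw [Real.sqrt_sq (by positivity)]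
  _ ≤ _ := Real.sqrt_le_sqrt h

lemma contP (α z : ℝ) : Continuous fun p : ℝ × ℝ => P α p.1 p.2 z := by
  unfold P; fun_prop

lemma measurableP (α a y : ℝ) : Measurable fun z => P α a y z := by
  unfold P; fun_prop

lemma measurable_g1 (α a y : ℝ) : Measurable fun z => 1 / Real.sqrt (P α a y z) :=
  measurable_const.div (Real.continuous_sqrt.measurable.comp (measurableP α a y))

lemma measurable_g2 (α a y : ℝ) :
    Measurable fun z => 1 / ((1 + z ^ 2) * Real.sqrt (P α a y z)) :=
  measurable_const.div
    ((measurable_const.add (measurable_id.pow_const 2)).mul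
      (Real.continuous_sqrt.measurable.comp (measurableP α a y)))

lemma intOn_inv_sq {c : ℝ} (hc : 0 < c) :
    IntegrableOn (fun z : ℝ => (z ^ 2)⁻¹) (Ioi c) := by
  have h := integrableOn_Ioi_rpow_of_lt (by norm_num : (-2 : ℝ) < -1) hc
  refine h.congr_fun (fun z hz => ?_) measurableSet_Ioi
  have hz0 : (0 : ℝ) < z := hc.trans hz
  show z ^ (-2 : ℝ) = (z ^ 2)⁻¹
  rw [show (-2 : ℝ) = -(2 : ℕ) by norm_num, Real.rpow_neg hz0.le, Real.rpow_natCast]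

lemma int_g1 {α y : ℝ} (hα : 0 < α) (hy : 0 < y) (a : ℝ) :
    IntegrableOn (fun z => 1 / Real.sqrt (P α a y z)) (Ioi (0 : ℝ)) := by
  rw [← Ioc_union_Ioi_eq_Ioi (zero_le_one' ℝ)]
  apply IntegrableOn.union
  · refine Integrable.mono' (g := fun _ => 1 / y)
      ((integrableOn_const_iff).2 (Or.inr (by simp [Real.volume_Ioc])))
      ((measurable_g1 α a y).aestronglyMeasurable) (Eventually.of_forall fun z => ?_)
    rw [Real.norm_eq_abs, abs_of_nonneg (by positivity)]
    exact one_div_le_one_div_of_le hy (sqrtP_ge_y hy.le a z)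
  · refine Integrable.mono' (g := fun z => α⁻¹ * (z ^ 2)⁻¹)
      ((intOn_inv_sq one_pos).const_mul _)
      ((measurable_g1 α a y).aestronglyMeasurable) ?_
    rw [ae_restrict_iff' measurableSet_Ioi]
    refine Eventually.of_forall fun z hz => ?_
    have hz1 : (1 : ℝ) < z := hz
    have hd : 0 < α * z ^ 2 := by positivity
    rw [Real.norm_eq_abs, abs_of_nonneg (by positivity)]
    calc 1 / Real.sqrt (P α a y z) ≤ 1 / (α * z ^ 2) :=
          one_div_le_one_div_of_le hd (sqrtP_ge_az2 hα.le a y z)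
    _ = α⁻¹ * (z ^ 2)⁻¹ := by rw [one_div, mul_inv]

lemma int_g2 {α y : ℝ} (hα : 0 < α) (hy : 0 < y) (a : ℝ) :
    IntegrableOn (fun z => 1 / ((1 + z ^ 2) * Real.sqrt (P α a y z))) (Ioi (0 : ℝ)) := by
  refine Integrable.mono' (g := fun z => y⁻¹ * (1 + z ^ 2)⁻¹)
    ((integrable_inv_one_add_sq.const_mul _).integrableOn)
    ((measurable_g2 α a y).aestronglyMeasurable) (Eventually.of_forall fun z => ?_)
  have h1 : (0 : ℝ) < 1 + z ^ 2 := by positivity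
  have h2 : 0 < Real.sqrt (P α a y z) := sqrtP_pos hα hy a z
  rw [Real.norm_eq_abs, abs_of_nonneg (by positivity)]
  rw [one_div, mul_inv, mul_comm]
  have : (Real.sqrt (P α a y z))⁻¹ ≤ y⁻¹ :=
    inv_anti₀ hy (sqrtP_ge_y hy.le a z)
  exact mul_le_mul_of_nonneg_right this (by positivity)

lemma g1_sub_g2 {α y : ℝ} (hα : 0 < α) (hy : 0 < y) (a z : ℝ) :
    1 / Real.sqrt (P α a y z) - 1 / ((1 + z ^ 2) * Real.sqrt (P α a y z)) =
      z ^ 2 / ((1 + z ^ 2) * Real.sqrt (P α a y z)) := by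
  have h1 : (1 : ℝ) + z ^ 2 ≠ 0 := by positivity
  have h2 : Real.sqrt (P α a y z) ≠ 0 := (sqrtP_pos hα hy a z).ne'
  field_simp
  ring

lemma int_h {α y : ℝ} (hα : 0 < α) (hy : 0 < y) (a : ℝ) :
    IntegrableOn (fun z => z ^ 2 / ((1 + z ^ 2) * Real.sqrt (P α a y z))) (Ioi (0 : ℝ)) := by
  exact (Integrable.sub (int_g1 hα hy a) (int_g2 hα hy a)).congr
    (Eventually.of_forall fun z => g1_sub_g2 hα hy a z)

noncomputable def Fi (α a y : ℝ) : ℝ := ∫ z in Ioi (0 : ℝ), 1 / Real.sqrt (P α a y z)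

noncomputable def Gi (α a y : ℝ) : ℝ :=
  ∫ z in Ioi (0 : ℝ), 1 / ((1 + z ^ 2) * Real.sqrt (P α a y z))

noncomputable def Hi (α a y : ℝ) : ℝ :=
  ∫ z in Ioi (0 : ℝ), z ^ 2 / ((1 + z ^ 2) * Real.sqrt (P α a y z))

lemma Fi_sub_Gi {α y : ℝ} (hα : 0 < α) (hy : 0 < y) (a : ℝ) :
    Fi α a y - Gi α a y = Hi α a y := by
  rw [Fi, Gi, Hi, ← integral_sub (int_g1 hα hy a) (int_g2 hα hy a)]
  exact setIntegral_congr_fun measurableSet_Ioi fun z _ => g1_sub_g2 hα hy a z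

/-- generic strict integral inequality on `Ioi 0`. -/
lemma integral_lt_integral_Ioi {f g : ℝ → ℝ} (hf : IntegrableOn f (Ioi (0 : ℝ)))
    (hg : IntegrableOn g (Ioi (0 : ℝ))) (hlt : ∀ z ∈ Ioi (0 : ℝ), f z < g z) :
    (∫ z in Ioi (0 : ℝ), f z) < ∫ z in Ioi (0 : ℝ), g z := by
  have hint : IntegrableOn (fun z => g z - f z) (Ioi (0 : ℝ)) := hg.sub hf
  have h1 : (0 : ℝ → ℝ) ≤ᵐ[volume.restrict (Ioi (0:ℝ))] fun z => g z - f z := by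
    rw [EventuallyLE, ae_restrict_iff' measurableSet_Ioi]
    exact Eventually.of_forall fun z hz => sub_nonneg.mpr (hlt z hz).le
  have hpos : 0 < ∫ z in Ioi (0 : ℝ), (g z - f z) := by
    rw [setIntegral_pos_iff_support_of_nonneg_ae h1 hint]
    refine lt_of_lt_of_le ?_ (measure_mono (show Ioi (0 : ℝ) ⊆
      Function.support (fun z => g z - f z) ∩ Ioi 0 from
      fun z hz => ⟨sub_ne_zero.mpr (hlt z hz).ne', hz⟩))
    simp [Real.volume_Ioi]
  have := integral_sub hg hf
  have h2 : (∫ z in Ioi (0:ℝ), (g z - f z)) = (∫ z in Ioi (0:ℝ), g z) - ∫ z in Ioi (0:ℝ), f z :=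
    integral_sub hg hf
  linarith

/-- `Fi` is strictly antitone in `y`. -/
lemma Fi_strictAnti_y {α y₁ y₂ : ℝ} (hα : 0 < α) (hy₁ : 0 < y₁) (h12 : y₁ < y₂) (a : ℝ) :
    Fi α a y₂ < Fi α a y₁ := by
  have hy₂ : 0 < y₂ := hy₁.trans h12
  refine integral_lt_integral_Ioi (int_g1 hα hy₂ a) (int_g1 hα hy₁ a) fun z hz => ?_
  have hP1 : 0 < P α a y₁ z := P_pos hα hy₁ a z
  have hsq : y₁ ^ 2 < y₂ ^ 2 := by nlinarith
  have hlt : P α a y₁ z < P α a y₂ z := by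
    unfold P; nlinarith [sq_nonneg z]
  have := Real.sqrt_lt_sqrt hP1.le hlt
  exact one_div_lt_one_div_of_lt (Real.sqrt_pos.mpr hP1) this

lemma Fi_anti_y {α y₁ y₂ : ℝ} (hα : 0 < α) (hy₁ : 0 < y₁) (h12 : y₁ ≤ y₂) (a : ℝ) :
    Fi α a y₂ ≤ Fi α a y₁ := by
  rcases eq_or_lt_of_le h12 with rfl | h
  · exact le_refl _
  · exact (Fi_strictAnti_y hα hy₁ h a).le

/-- `Fi` is strictly antitone in `a` on nonneg `a`. -/
lemma Fi_strictAnti_a {α y a₁ a₂ : ℝ} (hα : 0 < α) (hy : 0 < y) (ha₁ : 0 ≤ a₁) (h12 : a₁ < a₂) :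
    Fi α a₂ y < Fi α a₁ y := by
  refine integral_lt_integral_Ioi (int_g1 hα hy a₂) (int_g1 hα hy a₁) fun z hz => ?_
  have hz0 : (0 : ℝ) < z := hz
  have hP1 : 0 < P α a₁ y z := P_pos hα hy a₁ z
  have ha4 : a₁ ^ 4 < a₂ ^ 4 := by
    exact pow_lt_pow_left₀ h12 ha₁ (by norm_num)
  have hlt : P α a₁ y z < P α a₂ y z := by
    unfold P
    have : 0 < z ^ 2 := by positivity
    nlinarith
  exact one_div_lt_one_div_of_lt (Real.sqrt_pos.mpr hP1) (Real.sqrt_lt_sqrt hP1.le hlt)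

lemma contAt_g2 {α y₀ : ℝ} (hα : 0 < α) (hy₀ : 0 < y₀) (a₀ z : ℝ) :
    ContinuousAt (fun p : ℝ × ℝ => 1 / ((1 + z ^ 2) * Real.sqrt (P α p.1 p.2 z))) (a₀, y₀) := by
  have hden : ((1 : ℝ) + z ^ 2) * Real.sqrt (P α a₀ y₀ z) ≠ 0 := by
    have := sqrtP_pos hα hy₀ a₀ z
    positivity
  exact continuousAt_const.div
    (continuousAt_const.mul
      ((Real.continuous_sqrt.continuousAt).comp (contP α z).continuousAt)) hden

lemma contAt_g1 {α y₀ : ℝ} (hα : 0 < α) (hy₀ : 0 < y₀) (a₀ z : ℝ) :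
    ContinuousAt (fun p : ℝ × ℝ => 1 / Real.sqrt (P α p.1 p.2 z)) (a₀, y₀) := by
  have hden : Real.sqrt (P α a₀ y₀ z) ≠ 0 := (sqrtP_pos hα hy₀ a₀ z).ne'
  exact continuousAt_const.div
    ((Real.continuous_sqrt.continuousAt).comp (contP α z).continuousAt) hden

lemma measurable_g1p (α : ℝ) (p : ℝ × ℝ) :
    AEStronglyMeasurable (fun z => 1 / Real.sqrt (P α p.1 p.2 z))
      (volume.restrict (Ioi (0:ℝ))) := (measurable_g1 α p.1 p.2).aestronglyMeasurable

lemma contG {α : ℝ} (hα : 0 < α) {a₀ y₀ : ℝ} (hy₀ : 0 < y₀) :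
    ContinuousAt (fun p : ℝ × ℝ => Gi α p.1 p.2) (a₀, y₀) := by
  refine continuousAt_of_dominated (bound := fun z => (2 / y₀) * (1 + z ^ 2)⁻¹)
    (Eventually.of_forall fun p => (measurable_g2 α p.1 p.2).aestronglyMeasurable) ?_ ?_ ?_
  · have hev : ∀ᶠ p : ℝ × ℝ in nhds (a₀, y₀), y₀ / 2 < p.2 :=
      continuous_snd.continuousAt (eventually_gt_nhds (by linarith : y₀ / 2 < y₀))
    filter_upwards [hev] with p hp
    refine Eventually.of_forall fun z => ?_
    have hp2 : 0 < p.2 := lt_trans (by linarith) hp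
    have h1 : (0 : ℝ) < 1 + z ^ 2 := by positivity
    have h2 : 0 < Real.sqrt (P α p.1 p.2 z) := sqrtP_pos hα hp2 p.1 z
    rw [Real.norm_eq_abs, abs_of_nonneg (by positivity)]
    have hs : p.2 ≤ Real.sqrt (P α p.1 p.2 z) := sqrtP_ge_y hp2.le p.1 z
    have h3 : 1 / p.2 ≤ 2 / y₀ := by
      rw [div_le_div_iff₀ hp2 hy₀]; linarith
    have h4 : 1 / Real.sqrt (P α p.1 p.2 z) ≤ 2 / y₀ :=
      le_trans (one_div_le_one_div_of_le hp2 hs) h3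
    calc 1 / ((1 + z ^ 2) * Real.sqrt (P α p.1 p.2 z))
        = (1 / Real.sqrt (P α p.1 p.2 z)) * (1 + z ^ 2)⁻¹ := by
          rw [one_div, mul_inv, one_div, mul_comm]
    _ ≤ (2 / y₀) * (1 + z ^ 2)⁻¹ := mul_le_mul_of_nonneg_right h4 (by positivity)
  · exact ((integrable_inv_one_add_sq.const_mul _).integrableOn)
  · exact Eventually.of_forall fun z => contAt_g2 hα hy₀ a₀ z

lemma Fi_split {α y : ℝ} (hα : 0 < α) (hy : 0 < y) (a : ℝ) :
    Fi α a y = (∫ z in Ioc (0:ℝ) 1, 1 / Real.sqrt (P α a y z)) +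
      ∫ z in Ioi (1:ℝ), 1 / Real.sqrt (P α a y z) := by
  rw [Fi, ← Ioc_union_Ioi_eq_Ioi (zero_le_one' ℝ),
    setIntegral_union (Ioc_disjoint_Ioi le_rfl) measurableSet_Ioi
      ((int_g1 hα hy a).mono_set Ioc_subset_Ioi_self)
      ((int_g1 hα hy a).mono_set (Ioi_subset_Ioi zero_le_one))]

lemma contF {α y : ℝ} (hα : 0 < α) (hy : 0 < y) : Continuous fun a => Fi α a y := by
  rw [continuous_iff_continuousAt]
  intro a₀
  have hc : ∀ z : ℝ, ContinuousAt (fun a => 1 / Real.sqrt (P α a y z)) a₀ := by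
    intro z
    have h := (contAt_g1 hα hy a₀ z).comp (f := fun a : ℝ => (a, y))
      (Continuous.continuousAt (by fun_prop))
    exact h
  have hmeas : ∀ a : ℝ, AEStronglyMeasurable (fun z => 1 / Real.sqrt (P α a y z))
      (volume.restrict (Ioc (0:ℝ) 1)) := fun a => (measurable_g1 α a y).aestronglyMeasurable
  have hmeas2 : ∀ a : ℝ, AEStronglyMeasurable (fun z => 1 / Real.sqrt (P α a y z))
      (volume.restrict (Ioi (1:ℝ))) := fun a => (measurable_g1 α a y).aestronglyMeasurable
  have hpiece1 : ContinuousAt (fun a => ∫ z in Ioc (0:ℝ) 1, 1 / Real.sqrt (P α a y z)) a₀ := by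
    refine continuousAt_of_dominated (bound := fun _ => 1 / y)
      (Eventually.of_forall hmeas) (Eventually.of_forall fun a => ?_)
      ((integrableOn_const_iff).2 (Or.inr (by simp [Real.volume_Ioc])))
      (Eventually.of_forall fun z => hc z)
    refine Eventually.of_forall fun z => ?_
    rw [Real.norm_eq_abs, abs_of_nonneg (by positivity)]
    exact one_div_le_one_div_of_le hy (sqrtP_ge_y hy.le a z)
  have hpiece2 : ContinuousAt (fun a => ∫ z in Ioi (1:ℝ), 1 / Real.sqrt (P α a y z)) a₀ := by
    refine continuousAt_of_dominated (bound := fun z => α⁻¹ * (z ^ 2)⁻¹)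
      (Eventually.of_forall hmeas2) (Eventually.of_forall fun a => ?_)
      ((intOn_inv_sq one_pos).const_mul _)
      (Eventually.of_forall fun z => hc z)
    rw [ae_restrict_iff' measurableSet_Ioi]
    refine Eventually.of_forall fun z hz => ?_
    have hz1 : (1 : ℝ) < z := hz
    have hd : 0 < α * z ^ 2 := by positivity
    rw [Real.norm_eq_abs, abs_of_nonneg (by positivity)]
    calc 1 / Real.sqrt (P α a y z) ≤ 1 / (α * z ^ 2) :=
          one_div_le_one_div_of_le hd (sqrtP_ge_az2 hα.le a y z)
    _ = α⁻¹ * (z ^ 2)⁻¹ := by rw [one_div, mul_inv]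
  have : ContinuousAt (fun a => (∫ z in Ioc (0:ℝ) 1, 1 / Real.sqrt (P α a y z)) +
      ∫ z in Ioi (1:ℝ), 1 / Real.sqrt (P α a y z)) a₀ := hpiece1.add hpiece2
  have heq : (fun a => Fi α a y) = fun a => (∫ z in Ioc (0:ℝ) 1, 1 / Real.sqrt (P α a y z)) +
      ∫ z in Ioi (1:ℝ), 1 / Real.sqrt (P α a y z) := funext fun a => Fi_split hα hy a
  rw [heq]
  exact this

lemma integral_Ioi_inv_sq {a : ℝ} (ha : 0 < a) :
    (∫ z in Ioi a, (z ^ 2)⁻¹) = a⁻¹ := by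
  have h1 : (∫ z in Ioi a, (z ^ 2)⁻¹) = ∫ z in Ioi a, z ^ (-2 : ℝ) := by
    refine setIntegral_congr_fun measurableSet_Ioi fun z hz => ?_
    have hz0 : (0 : ℝ) < z := ha.trans hz
    rw [show (-2 : ℝ) = -(2 : ℕ) by norm_num, Real.rpow_neg hz0.le, Real.rpow_natCast]
  rw [h1, integral_Ioi_rpow_of_lt (by norm_num) ha]
  norm_num
  rw [show (-1 : ℝ) = -(1 : ℕ) by norm_num, Real.rpow_neg ha.le, Real.rpow_natCast]
  simp

lemma Hi_le {α y a : ℝ} (hα : 0 < α) (hy : 0 < y) (ha : 0 < a) :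
    Hi α a y ≤ 1 / (2 * a) + 1 / (α * a) := by
  have hint := int_h hα hy a
  have hsplit : Hi α a y = (∫ z in Ioc (0:ℝ) a, z ^ 2 / ((1 + z ^ 2) * Real.sqrt (P α a y z))) +
      ∫ z in Ioi a, z ^ 2 / ((1 + z ^ 2) * Real.sqrt (P α a y z)) := by
    rw [Hi, ← Ioc_union_Ioi_eq_Ioi ha.le,
      setIntegral_union (Ioc_disjoint_Ioi le_rfl) measurableSet_Ioi
        (hint.mono_set Ioc_subset_Ioi_self)
        (hint.mono_set (Ioi_subset_Ioi ha.le))]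
  have hp1 : (∫ z in Ioc (0:ℝ) a, z ^ 2 / ((1 + z ^ 2) * Real.sqrt (P α a y z))) ≤ 1 / (2 * a) := by
    have hmono : ∀ z ∈ Ioc (0:ℝ) a, z ^ 2 / ((1 + z ^ 2) * Real.sqrt (P α a y z)) ≤
        1 / (2 * a ^ 2) := by
      intro z hz
      have hz0 : (0 : ℝ) < z := hz.1
      have h1 : a ^ 2 * z ≤ Real.sqrt (P α a y z) := sqrtP_ge_a2z ha.le hz0.le α y
      have hD : (0:ℝ) < (1 + z ^ 2) * (a ^ 2 * z) := by positivity
      have hDP : (1 + z ^ 2) * (a ^ 2 * z) ≤ (1 + z ^ 2) * Real.sqrt (P α a y z) :=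
        mul_le_mul_of_nonneg_left h1 (by positivity)
      calc z ^ 2 / ((1 + z ^ 2) * Real.sqrt (P α a y z))
          ≤ z ^ 2 / ((1 + z ^ 2) * (a ^ 2 * z)) := by gcongr
      _ ≤ 1 / (2 * a ^ 2) := by
          rw [div_le_div_iff₀ hD (by positivity)]
          nlinarith [sq_nonneg (z - 1)]
    calc (∫ z in Ioc (0:ℝ) a, z ^ 2 / ((1 + z ^ 2) * Real.sqrt (P α a y z)))
        ≤ ∫ _z in Ioc (0:ℝ) a, 1 / (2 * a ^ 2) :=
          setIntegral_mono_on (hint.mono_set Ioc_subset_Ioi_self)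
            ((integrableOn_const_iff).2 (Or.inr (by simp [Real.volume_Ioc])))
            measurableSet_Ioc hmono
    _ = a * (1 / (2 * a ^ 2)) := by
          rw [setIntegral_const, measureReal_def, Real.volume_Ioc, smul_eq_mul, sub_zero,
            ENNReal.toReal_ofReal ha.le]
    _ = 1 / (2 * a) := by field_simp
  have hp2 : (∫ z in Ioi a, z ^ 2 / ((1 + z ^ 2) * Real.sqrt (P α a y z))) ≤ 1 / (α * a) := by
    have hmono : ∀ z ∈ Ioi a, z ^ 2 / ((1 + z ^ 2) * Real.sqrt (P α a y z)) ≤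
        α⁻¹ * (z ^ 2)⁻¹ := by
      intro z hz
      have hz0 : (0 : ℝ) < z := ha.trans hz
      have h1 : α * z ^ 2 ≤ Real.sqrt (P α a y z) := sqrtP_ge_az2 hα.le a y z
      have hD : (0:ℝ) < (1 + z ^ 2) * (α * z ^ 2) := by positivity
      have hDP : (1 + z ^ 2) * (α * z ^ 2) ≤ (1 + z ^ 2) * Real.sqrt (P α a y z) :=
        mul_le_mul_of_nonneg_left h1 (by positivity)
      calc z ^ 2 / ((1 + z ^ 2) * Real.sqrt (P α a y z))
          ≤ z ^ 2 / ((1 + z ^ 2) * (α * z ^ 2)) := by gcongr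
      _ ≤ α⁻¹ * (z ^ 2)⁻¹ := by
          rw [show α⁻¹ * (z ^ 2)⁻¹ = 1 / (α * z ^ 2) by rw [one_div, mul_inv]]
          rw [div_le_div_iff₀ hD (by positivity)]
          nlinarith [sq_nonneg z, mul_pos hα (by positivity : (0:ℝ) < z ^ 2)]
    calc (∫ z in Ioi a, z ^ 2 / ((1 + z ^ 2) * Real.sqrt (P α a y z)))
        ≤ ∫ z in Ioi a, α⁻¹ * (z ^ 2)⁻¹ :=
          setIntegral_mono_on (hint.mono_set (Ioi_subset_Ioi ha.le))
            ((intOn_inv_sq ha).const_mul _) measurableSet_Ioi hmono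
    _ = α⁻¹ * a⁻¹ := by rw [integral_const_mul, integral_Ioi_inv_sq ha]
    _ = 1 / (α * a) := by rw [one_div, mul_inv]
  rw [hsplit]
  exact add_le_add hp1 hp2

end Stmt5Aux

open Stmt5Aux in
theorem stmt5 (α β : ℝ) (hα : 0 < α) (hβ : 0 ≤ β) (b : ℝ → ℝ)
    (hb : ∀ a : ℝ, 0 ≤ a → 0 < b a ∧
      (∫ z in Set.Ioi (0 : ℝ),
        1 / Real.sqrt (α ^ 2 * z ^ 4 + (α ^ 2 + (b a) ^ 2 + a ^ 4) * z ^ 2 + (b a) ^ 2)) =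
        π / 2) :
    ∃ a : ℝ, 0 ≤ a ∧
      a ^ 2 * (∫ z in Set.Ioi (0 : ℝ),
        1 / ((1 + z ^ 2) *
          Real.sqrt (α ^ 2 * z ^ 4 + (α ^ 2 + (b a) ^ 2 + a ^ 4) * z ^ 2 + (b a) ^ 2))) =
        β / 2 := by
  have hbpos : ∀ a : ℝ, 0 ≤ a → 0 < b a := fun a ha => (hb a ha).1
  have hbF : ∀ a : ℝ, 0 ≤ a → Fi α a (b a) = π / 2 := fun a ha => (hb a ha).2
  -- b is strictly antitone on [0, ∞)
  have banti : ∀ a₁ a₂ : ℝ, 0 ≤ a₁ → a₁ < a₂ → b a₂ < b a₁ := by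
    intro a₁ a₂ h1 h12
    by_contra hcon
    push_neg at hcon
    have h2 : (0:ℝ) ≤ a₂ := le_trans h1 h12.le
    have hlt : Fi α a₂ (b a₁) < Fi α a₁ (b a₁) := Fi_strictAnti_a hα (hbpos a₁ h1) h1 h12
    have hle : Fi α a₂ (b a₂) ≤ Fi α a₂ (b a₁) := Fi_anti_y hα (hbpos a₁ h1) hcon a₂
    have e1 := hbF a₁ h1
    have e2 := hbF a₂ h2
    linarith
  -- b hits every value between b A and b 0
  have bsurj : ∀ A : ℝ, 0 ≤ A → ∀ y, b A ≤ y → y ≤ b 0 → ∃ c, c ∈ Icc (0:ℝ) A ∧ b c = y := by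
    intro A hA y hyA hy0
    have hy : 0 < y := lt_of_lt_of_le (hbpos A hA) hyA
    have hcont : ContinuousOn (fun a => Fi α a y) (Icc 0 A) := (contF hα hy).continuousOn
    have hFA : Fi α A y ≤ π / 2 := by
      rw [← hbF A hA]; exact Fi_anti_y hα (hbpos A hA) hyA A
    have hF0 : π / 2 ≤ Fi α 0 y := by
      rw [← hbF 0 le_rfl]; exact Fi_anti_y hα hy hy0 0
    obtain ⟨c, hc, hFc⟩ := intermediate_value_Icc' hA hcont ⟨hFA, hF0⟩
    refine ⟨c, hc, ?_⟩
    by_contra hne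
    have e := hbF c hc.1
    rcases lt_or_gt_of_ne hne with h | h
    · have := Fi_strictAnti_y hα (hbpos c hc.1) h c
      linarith
    · have := Fi_strictAnti_y hα hy h c
      linarith
  -- continuity of b
  have hmono : StrictMonoOn (fun a => -(b a)) (Ici (0:ℝ)) := by
    intro a₁ h1 a₂ h2 h12
    simp only [neg_lt_neg_iff]
    exact banti a₁ a₂ h1 h12
  have bcontAt : ∀ x : ℝ, 0 < x → ContinuousAt b x := by
    intro x hx
    have hs : Ici (0:ℝ) ∈ nhds x := mem_of_superset (isOpen_Ioi.mem_nhds hx) Ioi_subset_Ici_self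
    have hb0x : b x < b 0 := banti 0 x le_rfl hx
    have hbx1 : b (x+1) < b x := banti x (x+1) hx.le (by linarith)
    have hcf : ContinuousAt (fun a => -(b a)) x := by
      refine StrictMonoOn.continuousAt_of_exists_between hmono hs ?_ ?_
      · intro v hv
        have hv' : b x < -v := by linarith
        set w := min (-v) ((b x + b 0)/2) with hw
        have hw1 : b x < w := lt_min hv' (by linarith)
        have hw2 : w ≤ b 0 := le_trans (min_le_right _ _) (by linarith)
        obtain ⟨c, hc, hbc⟩ := bsurj x hx.le w hw1.le hw2
        refine ⟨c, hc.1, ?_, ?_⟩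
        · rw [hbc]; linarith [min_le_left (-v) ((b x + b 0)/2)]
        · rw [hbc]; linarith
      · intro v hv
        have hv' : -v < b x := by linarith
        set w := max (-v) ((b x + b (x+1))/2) with hw
        have hw1 : w < b x := max_lt hv' (by linarith)
        have hw2 : b (x+1) ≤ w := le_trans (by linarith) (le_max_right _ _)
        have hw3 : w ≤ b 0 := le_trans hw1.le hb0x.le
        obtain ⟨c, hc, hbc⟩ := bsurj (x+1) (by linarith) w hw2 hw3
        refine ⟨c, hc.1, ?_, ?_⟩
        · rw [hbc]; linarith
        · rw [hbc]; linarith [le_max_left (-v) ((b x + b (x+1))/2)]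
    have h2 : ContinuousAt (fun a => -(-(b a))) x := hcf.neg
    simpa using h2
  have bcont0 : ContinuousWithinAt b (Ici (0:ℝ)) 0 := by
    have hb01 : b 1 < b 0 := banti 0 1 le_rfl one_pos
    have hcf : ContinuousWithinAt (fun a => -(b a)) (Ici (0:ℝ)) 0 := by
      refine StrictMonoOn.continuousWithinAt_right_of_exists_between hmono
        self_mem_nhdsWithin ?_
      intro v hv
      have hv' : -v < b 0 := by linarith
      set w := max (-v) ((b 0 + b 1)/2) with hw
      have hw1 : w < b 0 := max_lt hv' (by linarith)
      have hw2 : b 1 ≤ w := le_trans (by linarith) (le_max_right _ _)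
      obtain ⟨c, hc, hbc⟩ := bsurj 1 zero_le_one w hw2 hw1.le
      refine ⟨c, hc.1, ?_, ?_⟩
      · rw [hbc]; linarith
      · rw [hbc]; linarith [le_max_left (-v) ((b 0 + b 1)/2)]
    have h2 : ContinuousWithinAt (fun a => -(-(b a))) (Ici (0:ℝ)) 0 := hcf.neg
    simpa using h2
  have bcontOn : ∀ A : ℝ, 0 ≤ A → ContinuousOn b (Icc 0 A) := by
    intro A hA x hx
    rcases eq_or_lt_of_le hx.1 with h0 | hpos
    · rw [← h0]
      exact (bcont0.mono Icc_subset_Ici_self)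
    · exact (bcontAt x hpos).continuousWithinAt
  -- the target function
  set f : ℝ → ℝ := fun a => a ^ 2 * Gi α a (b a) with hfdef
  have fcont : ∀ A : ℝ, 0 ≤ A → ContinuousOn f (Icc 0 A) := by
    intro A hA
    refine ContinuousOn.mul ((continuous_pow 2).continuousOn) ?_
    intro x hx
    have h2 : ContinuousAt (fun p : ℝ × ℝ => Gi α p.1 p.2) (x, b x) := contG hα (hbpos x hx.1)
    have h3 : ContinuousWithinAt (fun a => (a, b a)) (Icc 0 A) x :=
      (continuousWithinAt_id).prodMk ((bcontOn A hA) x hx)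
    exact ContinuousAt.comp_continuousWithinAt (f := fun a => (a, b a)) h2 h3
  -- lower bound at a large point A
  set A := max 1 ((β + 1/2 + 1/α) * (2/π)) with hAdef
  have hA1 : (1:ℝ) ≤ A := le_max_left _ _
  have hA0 : (0:ℝ) < A := lt_of_lt_of_le one_pos hA1
  have hπ : (0:ℝ) < π := pi_pos
  have hGA : π/2 - (1/(2*A) + 1/(α*A)) ≤ Gi α A (b A) := by
    have h1 := Fi_sub_Gi hα (hbpos A hA0.le) A
    have h2 := Hi_le hα (hbpos A hA0.le) hA0
    have h3 := hbF A hA0.le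
    linarith
  have hfA : β ≤ f A := by
    have h2 : (β + 1/2 + 1/α) * (2/π) ≤ A := le_max_right _ _
    have h3 : β + 1/2 + 1/α ≤ A * (π/2) := by
      calc β + 1/2 + 1/α = ((β + 1/2 + 1/α) * (2/π)) * (π/2) := by field_simp
      _ ≤ A * (π/2) := mul_le_mul_of_nonneg_right h2 (by positivity)
    have e1 : A ^ 2 * (1/(2*A) + 1/(α*A)) = A/2 + A/α := by field_simp
    have h4 : A ^ 2 * (π/2 - (1/(2*A) + 1/(α*A))) ≤ A ^ 2 * Gi α A (b A) :=
      mul_le_mul_of_nonneg_left hGA (sq_nonneg A)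
    have h5 : A * (β + 1/2 + 1/α) ≤ A * (A * (π/2)) :=
      mul_le_mul_of_nonneg_left h3 hA0.le
    have h6 : β ≤ A * β := le_mul_of_one_le_left hβ hA1
    have h7 : 0 < 1/α := by positivity
    have h8 : A * (β + 1/2 + 1/α) = A*β + A/2 + A/α := by ring
    calc β ≤ A * (A * (π/2)) - A/2 - A/α := by linarith
    _ = A ^ 2 * (π/2) - (A/2 + A/α) := by ring
    _ = A ^ 2 * (π/2 - (1/(2*A) + 1/(α*A))) := by rw [mul_sub, e1]
    _ ≤ A ^ 2 * Gi α A (b A) := h4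
  have hf0 : f 0 = 0 := by simp [hfdef]
  have hmem : β/2 ∈ Icc (f 0) (f A) := by
    constructor
    · rw [hf0]; linarith
    · linarith
  obtain ⟨a, ha, hfa⟩ := intermediate_value_Icc hA0.le (fcont A hA0.le) hmem
  exact ⟨a, ha.1, hfa⟩
end

section
/- Let α ∈ ℝ, a ≥ 0, and let g : (0, π) → ℝ be twice differentiable with 0 < g(y) < π, satisfying g'' + cot(g)(α² + a⁴sin⁴(g) − (g')²) = 0, g(π/2) = π/2 and g'(π/2) = b. Then (g'(y))² = α² + (b² + a⁴ − α²)·sin²(g(y)) − a⁴·sin⁴(g(y)) for all y ∈ (0, π). -/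
open Real

/-- If `g : (0,π) → ℝ` is twice differentiable with `0 < g < π`, satisfies
`g'' + cot(g)(α² + a⁴sin⁴(g) − (g')²) = 0`, `g(π/2) = π/2` and `g'(π/2) = b`, then
`(g')² = α² + (b² + a⁴ − α²)sin²(g) − a⁴sin⁴(g)` on `(0, π)`. -/
theorem stmt9 (α a b : ℝ) (ha : 0 ≤ a) (g : ℝ → ℝ)
    (hg : ∀ y ∈ Set.Ioo 0 π, DifferentiableAt ℝ g y ∧ DifferentiableAt ℝ (deriv g) y)
    (hgr : ∀ y ∈ Set.Ioo 0 π, 0 < g y ∧ g y < π)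
    (hode : ∀ y ∈ Set.Ioo 0 π,
      deriv (deriv g) y +
        Real.cot (g y) * (α ^ 2 + a ^ 4 * Real.sin (g y) ^ 4 - (deriv g y) ^ 2) = 0)
    (hgmid : g (π / 2) = π / 2) (hgb : deriv g (π / 2) = b) :
    ∀ y ∈ Set.Ioo 0 π,
      (deriv g y) ^ 2 =
        α ^ 2 + (b ^ 2 + a ^ 4 - α ^ 2) * Real.sin (g y) ^ 2 -
          a ^ 4 * Real.sin (g y) ^ 4 := by
  set s : Set ℝ := Set.Ioo 0 π with hs
  have hsopen : IsOpen s := isOpen_Ioo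
  set f : ℝ → ℝ := fun y =>
    ((deriv g y) ^ 2 - α ^ 2) / Real.sin (g y) ^ 2 + a ^ 4 * Real.sin (g y) ^ 2 with hf
  have hsinpos : ∀ z ∈ s, 0 < Real.sin (g z) := fun z hz =>
    Real.sin_pos_of_pos_of_lt_pi (hgr z hz).1 (hgr z hz).2
  have hf0 : ∀ z ∈ s, HasDerivAt f 0 z := by
    intro z hz
    have h1 : HasDerivAt g (deriv g z) z := (hg z hz).1.hasDerivAt
    have h2 : HasDerivAt (deriv g) (deriv (deriv g) z) z := (hg z hz).2.hasDerivAt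
    have hsin : HasDerivAt (fun y => Real.sin (g y)) (Real.cos (g z) * deriv g z) z :=
      (Real.hasDerivAt_sin (g z)).comp z h1
    have hsin2 : HasDerivAt (fun y => Real.sin (g y) ^ 2)
        ((2 : ℕ) * Real.sin (g z) ^ 1 * (Real.cos (g z) * deriv g z)) z := hsin.pow 2
    have hnum : HasDerivAt (fun y => (deriv g y) ^ 2 - α ^ 2)
        ((2 : ℕ) * deriv g z ^ 1 * deriv (deriv g) z) z := (h2.pow 2).sub_const _
    have hsz : Real.sin (g z) ≠ 0 := (hsinpos z hz).ne'
    have hden : Real.sin (g z) ^ 2 ≠ 0 := pow_ne_zero _ hsz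
    have hdiv := hnum.div hsin2 hden
    have htot := hdiv.add (hsin2.const_mul (a ^ 4))
    convert htot using 1
    case e'_4 => rfl
    case e'_5 => rfl
    case e'_8 => rfl
    have hw : deriv (deriv g) z =
        -(Real.cos (g z) / Real.sin (g z)) *
          (α ^ 2 + a ^ 4 * Real.sin (g z) ^ 4 - (deriv g z) ^ 2) := by
      have := hode z hz
      rw [Real.cot_eq_cos_div_sin] at this
      linarith
    rw [hw]
    field_simp
    ring
  have hconst : ∀ z ∈ s, f z = f (π / 2) := by
    have hmid : (π / 2) ∈ s := ⟨by positivity, by linarith [pi_pos]⟩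
    intro z hz
    refine (convex_Ioo 0 π).is_const_of_fderivWithin_eq_zero
      (fun w hw => ((hf0 w hw).differentiableAt).differentiableWithinAt)
      (fun w hw => ?_) hz hmid
    rw [fderivWithin_of_isOpen hsopen hw, (hf0 w hw).hasFDerivAt.fderiv]
    ext x
    simp
  intro y hy
  have h2 : f y = b ^ 2 - α ^ 2 + a ^ 4 := by
    rw [hconst y hy, hf]
    simp only [hgmid, hgb, Real.sin_pi_div_two]
    ring
  have hsz : Real.sin (g y) ≠ 0 := (hsinpos y hy).ne'
  rw [hf] at h2
  field_simp at h2
  nlinarith [h2]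
end

section
/- Let α, a, b be real constants, set c² = α² + b² + a⁴, and let g : (0, π) → (0, π) be differentiable with (g')² = α² + (b² + a⁴ − α²)·sin²(g) − a⁴·sin⁴(g). Then the function z(y) = cot(g(y)) satisfies (z'(y))² = α²·z(y)⁴ + c²·z(y)² + b² for all y ∈ (0, π). -/
open Real

/-- If `g : (0,π) → (0,π)` is differentiable with
`(g')² = α² + (b² + a⁴ − α²)sin²(g) − a⁴sin⁴(g)`, then `z(y) = cot(g(y))` satisfies
`(z')² = α²z⁴ + c²z² + b²` with `c² = α² + b² + a⁴`. -/
theorem stmt10 (α a b : ℝ) (c2 : ℝ) (hc2 : c2 = α ^ 2 + b ^ 2 + a ^ 4) (g : ℝ → ℝ)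
    (hg : ∀ y ∈ Set.Ioo 0 π, DifferentiableAt ℝ g y)
    (hgr : ∀ y ∈ Set.Ioo 0 π, g y ∈ Set.Ioo 0 π)
    (hode : ∀ y ∈ Set.Ioo 0 π,
      (deriv g y) ^ 2 =
        α ^ 2 + (b ^ 2 + a ^ 4 - α ^ 2) * Real.sin (g y) ^ 2 -
          a ^ 4 * Real.sin (g y) ^ 4) :
    ∀ y ∈ Set.Ioo 0 π,
      (deriv (fun t => Real.cot (g t)) y) ^ 2 =
        α ^ 2 * Real.cot (g y) ^ 4 + c2 * Real.cot (g y) ^ 2 + b ^ 2 := by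
  intro y hy
  have hs : Real.sin (g y) ≠ 0 := ne_of_gt (Real.sin_pos_of_pos_of_lt_pi (hgr y hy).1 (hgr y hy).2)
  have hg' := (hg y hy).hasDerivAt
  have hcos : HasDerivAt (fun t => Real.cos (g t)) (-Real.sin (g y) * deriv g y) y :=
    (Real.hasDerivAt_cos (g y)).comp y hg'
  have hsin : HasDerivAt (fun t => Real.sin (g t)) (Real.cos (g y) * deriv g y) y :=
    (Real.hasDerivAt_sin (g y)).comp y hg'
  have hdiv : HasDerivAt (fun t => Real.cos (g t) / Real.sin (g t))
      ((-Real.sin (g y) * deriv g y * Real.sin (g y) -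
        Real.cos (g y) * (Real.cos (g y) * deriv g y)) / Real.sin (g y) ^ 2) y :=
    hcos.div hsin hs
  have hfun : (fun t => Real.cot (g t)) = fun t => Real.cos (g t) / Real.sin (g t) := by
    funext t; rw [Real.cot_eq_cos_div_sin]
  have hd : deriv (fun t => Real.cot (g t)) y = (-Real.sin (g y) * deriv g y * Real.sin (g y) -
        Real.cos (g y) * (Real.cos (g y) * deriv g y)) / Real.sin (g y) ^ 2 := by
    rw [hfun]; exact hdiv.deriv
  have hpyth : Real.cos (g y) ^ 2 = 1 - Real.sin (g y) ^ 2 := by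
    have := Real.sin_sq_add_cos_sq (g y); linarith
  have hnum : -Real.sin (g y) * deriv g y * Real.sin (g y) -
      Real.cos (g y) * (Real.cos (g y) * deriv g y) = -(deriv g y) := by
    linear_combination (-(deriv g y)) * (Real.sin_sq_add_cos_sq (g y))
  rw [hd, hnum, Real.cot_eq_cos_div_sin, hc2]
  have hode' := hode y hy
  field_simp
  linear_combination hode' -
    (α ^ 2 * (Real.cos (g y) ^ 2 + 1 - Real.sin (g y) ^ 2) +
      (α ^ 2 + b ^ 2 + a ^ 4) * Real.sin (g y) ^ 2) * hpyth
end

section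
/- Let α > 0, b > 0, a ≥ 0, set c² = α² + b² + a⁴, w = √((c² + √(c⁴ − 4α²b²))/(2α²)), and let λ ∈ [0, π/2) satisfy w²cos²λ = (c² − √(c⁴ − 4α²b²))/(2α²). Then a² ∫₀^∞ dz/((1 + z²)√(α²z⁴ + c²z² + b²)) = (a²/(αw)) ∫₀^{π/2} (sin²φ/(w² − (w² − 1)sin²φ)) · dφ/√(1 − sin²λ·sin²φ). -/
open Real MeasureTheory Set

set_option maxHeartbeats 1000000 in
/-- With `α > 0`, `b > 0`, `a ≥ 0`, `c² = α² + b² + a⁴`,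
`w = √((c² + √(c⁴ − 4α²b²))/(2α²))` and `λ ∈ [0, π/2)` defined by
`w²cos²λ = (c² − √(c⁴ − 4α²b²))/(2α²)`, one has
`a² ∫₀^∞ dz/((1 + z²)√(α²z⁴ + c²z² + b²)) =
 (a²/(αw)) ∫₀^{π/2} (sin²φ/(w² − (w² − 1)sin²φ)) dφ/√(1 − sin²λ sin²φ)`. -/
theorem stmt12 (α b a : ℝ) (hα : 0 < α) (hb : 0 < b) (ha : 0 ≤ a)
    (c2 : ℝ) (hc2 : c2 = α ^ 2 + b ^ 2 + a ^ 4)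
    (w : ℝ) (hw : w = Real.sqrt ((c2 + Real.sqrt (c2 ^ 2 - 4 * α ^ 2 * b ^ 2)) / (2 * α ^ 2)))
    (lam : ℝ) (hlam : lam ∈ Set.Ico (0 : ℝ) (π / 2))
    (hcos : w ^ 2 * Real.cos lam ^ 2 =
      (c2 - Real.sqrt (c2 ^ 2 - 4 * α ^ 2 * b ^ 2)) / (2 * α ^ 2)) :
    a ^ 2 * (∫ z in Set.Ioi (0 : ℝ),
        1 / ((1 + z ^ 2) * Real.sqrt (α ^ 2 * z ^ 4 + c2 * z ^ 2 + b ^ 2))) =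
      (a ^ 2 / (α * w)) *
        ∫ φ in (0 : ℝ)..(π / 2),
          (Real.sin φ ^ 2 / (w ^ 2 - (w ^ 2 - 1) * Real.sin φ ^ 2)) *
            (1 / Real.sqrt (1 - Real.sin lam ^ 2 * Real.sin φ ^ 2)) := by
  have hα2 : (0:ℝ) < α ^ 2 := pow_pos hα 2
  have hD : 0 ≤ c2 ^ 2 - 4 * α ^ 2 * b ^ 2 := by
    nlinarith [sq_nonneg (α ^ 2 - b ^ 2), sq_nonneg (a ^ 2), sq_nonneg (a ^ 4),
      mul_nonneg (add_nonneg (sq_nonneg α) (sq_nonneg b)) (pow_nonneg ha 4)]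
  set sD := Real.sqrt (c2 ^ 2 - 4 * α ^ 2 * b ^ 2) with hsDdef
  have hsD : sD ^ 2 = c2 ^ 2 - 4 * α ^ 2 * b ^ 2 := Real.sq_sqrt hD
  have hsD0 : 0 ≤ sD := Real.sqrt_nonneg _
  have hc2pos : 0 < c2 := by nlinarith [pow_pos hα 2, pow_pos hb 2, pow_nonneg ha 4]
  have hwsq : w ^ 2 = (c2 + sD) / (2 * α ^ 2) := by
    rw [hw]
    exact Real.sq_sqrt (by positivity)
  have hw2pos : 0 < w ^ 2 := by
    rw [hwsq]; positivity
  have hwpos : 0 < w := by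
    rw [hw]; exact Real.sqrt_pos.mpr (by positivity)
  have hsum' : α ^ 2 * w ^ 2 + α ^ 2 * (w ^ 2 * Real.cos lam ^ 2) = c2 := by
    rw [hcos, hwsq]; field_simp; ring
  have hprod4 : (α ^ 2 * w ^ 2) * (α ^ 2 * (w ^ 2 * Real.cos lam ^ 2)) = α ^ 2 * b ^ 2 := by
    rw [hcos, hwsq]
    field_simp
    linear_combination (-1 : ℝ) * hsD
  have hprod'' : α ^ 2 * (w ^ 2 * Real.cos lam ^ 2) * w ^ 2 = b ^ 2 := by
    refine mul_left_cancel₀ (ne_of_gt hα2) ?_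
    linear_combination hprod4
  have hfac : ∀ z : ℝ, α ^ 2 * z ^ 4 + c2 * z ^ 2 + b ^ 2
      = α ^ 2 * (z ^ 2 + w ^ 2 * Real.cos lam ^ 2) * (z ^ 2 + w ^ 2) := by
    intro z
    linear_combination (-(z ^ 2)) * hsum' - hprod''
  have hcoslam : 0 < Real.cos lam :=
    Real.cos_pos_of_mem_Ioo ⟨by linarith [hlam.1, Real.pi_pos], hlam.2⟩
  have hsl2 : Real.sin lam ^ 2 < 1 := by
    nlinarith [Real.sin_sq_add_cos_sq lam]
  -- the substitution z = w * cot φ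
  set f : ℝ → ℝ := fun φ => w * (Real.cos φ / Real.sin φ) with hfdef
  have hsin : ∀ φ ∈ Ioo (0:ℝ) (π/2), 0 < Real.sin φ := fun φ hφ =>
    Real.sin_pos_of_pos_of_lt_pi hφ.1 (by linarith [Real.pi_pos, hφ.2])
  have hcosφ : ∀ φ ∈ Ioo (0:ℝ) (π/2), 0 < Real.cos φ := fun φ hφ =>
    Real.cos_pos_of_mem_Ioo ⟨by linarith [hφ.1, Real.pi_pos], hφ.2⟩
  have hderiv : ∀ φ ∈ Ioo (0:ℝ) (π/2),
      HasDerivWithinAt f (-(w / Real.sin φ ^ 2)) (Ioo (0:ℝ) (π/2)) φ := by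
    intro φ hφ
    have hs := hsin φ hφ
    have h := ((Real.hasDerivAt_cos φ).div (Real.hasDerivAt_sin φ) hs.ne').const_mul w
    have heq : w * ((-Real.sin φ * Real.sin φ - Real.cos φ * Real.cos φ) / Real.sin φ ^ 2)
        = -(w / Real.sin φ ^ 2) := by
      have hp := Real.sin_sq_add_cos_sq φ
      field_simp
      linear_combination (-1 : ℝ) * hp
    rw [heq] at h
    exact h.hasDerivWithinAt
  have hinj : InjOn f (Ioo (0:ℝ) (π/2)) := by
    intro x hx y hy hxy
    have hsx := hsin x hx
    have hsy := hsin y hy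
    have hcx := hcosφ x hx
    have hcy := hcosφ y hy
    have h1 : Real.cos x * Real.sin y = Real.cos y * Real.sin x := by
      simp only [hfdef] at hxy
      have h2 := mul_left_cancel₀ hwpos.ne' hxy
      rw [div_eq_div_iff hsx.ne' hsy.ne'] at h2
      linarith
    have htan : Real.tan x = Real.tan y := by
      rw [Real.tan_eq_sin_div_cos, Real.tan_eq_sin_div_cos, div_eq_div_iff hcx.ne' hcy.ne']
      linarith
    exact Real.injOn_tan ⟨by linarith [hx.1, Real.pi_pos], hx.2⟩
      ⟨by linarith [hy.1, Real.pi_pos], hy.2⟩ htan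
  have himg : f '' Ioo (0:ℝ) (π/2) = Ioi (0:ℝ) := by
    ext z
    constructor
    · rintro ⟨φ, hφ, rfl⟩
      exact mem_Ioi.mpr (mul_pos hwpos (div_pos (hcosφ φ hφ) (hsin φ hφ)))
    · intro hz
      have hz' : (0:ℝ) < z := hz
      have ht : 0 < w / z := div_pos hwpos hz'
      refine ⟨Real.arctan (w / z), ⟨by simpa [Real.arctan_zero] using Real.arctan_strictMono ht, Real.arctan_lt_pi_div_two _⟩, ?_⟩
      have hS : 0 < Real.sqrt (1 + (w / z) ^ 2) := by positivity
      simp only [hfdef, Real.cos_arctan, Real.sin_arctan]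
      field_simp
  have key : (∫ z in Set.Ioi (0 : ℝ),
        1 / ((1 + z ^ 2) * Real.sqrt (α ^ 2 * z ^ 4 + c2 * z ^ 2 + b ^ 2)))
      = (1 / (α * w)) * ∫ φ in (0 : ℝ)..(π / 2),
          (Real.sin φ ^ 2 / (w ^ 2 - (w ^ 2 - 1) * Real.sin φ ^ 2)) *
            (1 / Real.sqrt (1 - Real.sin lam ^ 2 * Real.sin φ ^ 2)) := by
    rw [← himg,
      MeasureTheory.integral_image_eq_integral_abs_deriv_smul measurableSet_Ioo hderiv hinj,
      intervalIntegral.integral_of_le (by positivity : (0:ℝ) ≤ π/2),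
      MeasureTheory.integral_Ioc_eq_integral_Ioo,
      ← MeasureTheory.integral_const_mul]
    apply MeasureTheory.setIntegral_congr_fun measurableSet_Ioo
    intro φ hφ
    have hs := hsin φ hφ
    have hc := hcosφ φ hφ
    have hs1 : Real.sin φ ≤ 1 := Real.sin_le_one φ
    have hs2 : Real.sin φ ^ 2 ≤ 1 := Real.sin_sq_le_one φ
    have hpyth := Real.sin_sq_add_cos_sq φ
    have hpythl := Real.sin_sq_add_cos_sq lam
    have hA : (f φ) ^ 2 + w ^ 2 = w ^ 2 / Real.sin φ ^ 2 := by
      simp only [hfdef]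
      field_simp
      linear_combination hpyth
    have hB : (f φ) ^ 2 + w ^ 2 * Real.cos lam ^ 2
        = (w ^ 2 / Real.sin φ ^ 2) * (1 - Real.sin lam ^ 2 * Real.sin φ ^ 2) := by
      simp only [hfdef]
      field_simp
      linear_combination hpyth + Real.sin φ ^ 2 * hpythl
    have hE : α ^ 2 * (f φ) ^ 4 + c2 * (f φ) ^ 2 + b ^ 2
        = (α * (w ^ 2 / Real.sin φ ^ 2)) ^ 2 * (1 - Real.sin lam ^ 2 * Real.sin φ ^ 2) := by
      rw [hfac (f φ), hB, hA]; ring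
    have hR : 0 < 1 - Real.sin lam ^ 2 * Real.sin φ ^ 2 := by
      have h := mul_le_of_le_one_right (sq_nonneg (Real.sin lam)) hs2
      linarith
    have hsqrtE : Real.sqrt (α ^ 2 * (f φ) ^ 4 + c2 * (f φ) ^ 2 + b ^ 2)
        = (α * (w ^ 2 / Real.sin φ ^ 2)) * Real.sqrt (1 - Real.sin lam ^ 2 * Real.sin φ ^ 2) := by
      rw [hE, Real.sqrt_mul (sq_nonneg _), Real.sqrt_sq (by positivity)]
    have h1z : 1 + (f φ) ^ 2 = (w ^ 2 - (w ^ 2 - 1) * Real.sin φ ^ 2) / Real.sin φ ^ 2 := by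
      simp only [hfdef]
      field_simp
      linear_combination w ^ 2 * hpyth
    have habs : |(-(w / Real.sin φ ^ 2))| = w / Real.sin φ ^ 2 := by
      rw [abs_neg, abs_of_pos (by positivity)]
    have hRs : 0 < Real.sqrt (1 - Real.sin lam ^ 2 * Real.sin φ ^ 2) := Real.sqrt_pos.mpr hR
    have hwpos2 : 0 < w ^ 2 - (w ^ 2 - 1) * Real.sin φ ^ 2 := by
      have h1 : 0 ≤ w ^ 2 * (1 - Real.sin φ ^ 2) := mul_nonneg hw2pos.le (by linarith)
      have h2 : 0 < Real.sin φ ^ 2 := pow_pos hs 2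
      linarith [h1, h2]
    show |(-(w / Real.sin φ ^ 2))| • (1 / ((1 + (f φ) ^ 2) *
        Real.sqrt (α ^ 2 * (f φ) ^ 4 + c2 * (f φ) ^ 2 + b ^ 2))) = _
    rw [smul_eq_mul, habs, hsqrtE, h1z]
    field_simp
  rw [key]
  ring
end

section
/- Let α, b ∈ ℝ and let g : (0, π) → ℝ be twice differentiable with 0 < g(y) < π, satisfying g'' + cot(g)(α² − (g')²) = 0, g(π/2) = π/2 and g'(π/2) = b. Then (g'(y))² = α² + (b² − α²)·sin²(g(y)) for all y ∈ (0, π). -/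
open Real

/-- If `g : (0,π) → ℝ` is twice differentiable with `0 < g < π`, satisfies
`g'' + cot(g)(α² − (g')²) = 0`, `g(π/2) = π/2` and `g'(π/2) = b`, then
`(g')² = α² + (b² − α²)sin²(g)` on `(0, π)`. -/
theorem stmt15 (α b : ℝ) (g : ℝ → ℝ)
    (hg : ∀ y ∈ Set.Ioo 0 π, DifferentiableAt ℝ g y ∧ DifferentiableAt ℝ (deriv g) y)
    (hgr : ∀ y ∈ Set.Ioo 0 π, 0 < g y ∧ g y < π)
    (hode : ∀ y ∈ Set.Ioo 0 π,
      deriv (deriv g) y + Real.cot (g y) * (α ^ 2 - (deriv g y) ^ 2) = 0)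
    (hgmid : g (π / 2) = π / 2) (hgb : deriv g (π / 2) = b) :
    ∀ y ∈ Set.Ioo 0 π,
      (deriv g y) ^ 2 = α ^ 2 + (b ^ 2 - α ^ 2) * Real.sin (g y) ^ 2 := by
  set F : ℝ → ℝ := fun y => ((deriv g y) ^ 2 - α ^ 2) / (Real.sin (g y)) ^ 2 with hF
  have sinpos : ∀ y ∈ Set.Ioo 0 π, 0 < Real.sin (g y) := fun y hy =>
    Real.sin_pos_of_pos_of_lt_pi (hgr y hy).1 (hgr y hy).2
  have hder : ∀ y ∈ Set.Ioo 0 π, HasDerivAt F 0 y := by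
    intro y hy
    have hsp := sinpos y hy
    have hsne : Real.sin (g y) ≠ 0 := ne_of_gt hsp
    have hd1 : HasDerivAt g (deriv g y) y := (hg y hy).1.hasDerivAt
    have hd2 : HasDerivAt (deriv g) (deriv (deriv g) y) y := (hg y hy).2.hasDerivAt
    have hnum : HasDerivAt (fun y => (deriv g y) ^ 2 - α ^ 2)
        (2 * (deriv g y) ^ 1 * deriv (deriv g) y) y := by
      simpa using (hd2.pow 2).sub_const (α ^ 2)
    have hden : HasDerivAt (fun y => (Real.sin (g y)) ^ 2)
        (2 * (Real.sin (g y)) ^ 1 * (Real.cos (g y) * deriv g y)) y := by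
      simpa using (hd1.sin.fun_pow 2)
    have hdiv := hnum.div hden (by positivity)
    have hode' := hode y hy
    rw [Real.cot_eq_cos_div_sin] at hode'
    have hgg : deriv (deriv g) y = - (Real.cos (g y) / Real.sin (g y)) *
        (α ^ 2 - (deriv g y) ^ 2) := by linarith
    have : (2 * (deriv g y) ^ 1 * deriv (deriv g) y * Real.sin (g y) ^ 2 -
        ((deriv g y) ^ 2 - α ^ 2) * (2 * (Real.sin (g y)) ^ 1 * (Real.cos (g y) * deriv g y))) /
        ((Real.sin (g y)) ^ 2) ^ 2 = 0 := by
      rw [hgg]; field_simp; ring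
    rw [this] at hdiv
    exact hdiv
  have hmid : (π / 2 : ℝ) ∈ Set.Ioo 0 π := by
    constructor
    · positivity
    · linarith [Real.pi_pos]
  have hconst : ∀ y ∈ Set.Ioo 0 π, F y = F (π / 2) := by
    intro y hy
    have hconv : Convex ℝ (Set.Ioo (0:ℝ) π) := convex_Ioo 0 π
    refine hconv.is_const_of_fderivWithin_eq_zero (𝕜 := ℝ)
      (fun z hz => ((hder z hz).differentiableAt).differentiableWithinAt) ?_ hy hmid
    intro z hz
    have hu : UniqueDiffWithinAt ℝ (Set.Ioo (0:ℝ) π) z :=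
      (isOpen_Ioo.uniqueDiffWithinAt hz)
    rw [((hder z hz).hasFDerivAt.hasFDerivWithinAt).fderivWithin hu]
    ext; simp
  intro y hy
  have h1 := hconst y hy
  have hsp := sinpos y hy
  have hsne : Real.sin (g y) ≠ 0 := ne_of_gt hsp
  have hFmid : F (π / 2) = b ^ 2 - α ^ 2 := by
    simp only [hF, hgmid, hgb, Real.sin_pi_div_two]
    norm_num
  rw [hFmid] at h1
  have h2 : (deriv g y) ^ 2 - α ^ 2 = (b ^ 2 - α ^ 2) * Real.sin (g y) ^ 2 := by
    have := h1
    simp only [hF] at this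
    field_simp at this
    linarith [this]
  linarith
end

section
/- Let α > 0, b > 0 and let g : [0, π/2] → [0, π/2] be continuous, twice differentiable on (0, π/2) with 0 < g(y) < π for y ∈ (0, π/2), g' > 0 on (0, π/2), satisfying g'' + cot(g)(α² − (g')²) = 0 on (0, π/2), with g(0) = 0, g(π/2) = π/2 and g'(π/2) = b. Then for every y ∈ [0, π/2], ∫₀^{g(y)} du/√(1 − (1 − b²/α²)·sin²u) = αy. -/
open Real

/-- A function with zero derivative on an open interval is constant there. -/
lemma aux_const_of_deriv_zero {f : ℝ → ℝ} {a b : ℝ}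
    (hf : ∀ x ∈ Set.Ioo a b, HasDerivAt f 0 x) :
    ∀ y ∈ Set.Ioo a b, ∀ z ∈ Set.Ioo a b, f y = f z := by
  intro y hy z hz
  wlog h : y ≤ z generalizing y z
  · exact (this z hz y hy (le_of_not_ge h)).symm
  have hsub : Set.Icc y z ⊆ Set.Ioo a b := Set.Icc_subset_Ioo hy.1 hz.2
  have hcont : ContinuousOn f (Set.Icc y z) := fun x hx =>
    ((hf x (hsub hx)).differentiableAt.continuousAt).continuousWithinAt
  have hder : ∀ x ∈ Set.Ico y z, HasDerivWithinAt f 0 (Set.Ici x) x := fun x hx =>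
    (hf x (hsub (Set.Ico_subset_Icc_self hx))).hasDerivWithinAt
  exact (constant_of_has_deriv_right_zero hcont hder z (Set.right_mem_Icc.mpr h)).symm

/-- If `g : [0, π/2] → [0, π/2]` is continuous, twice differentiable on
`(0, π/2)` with `0 < g < π` and `g' > 0` there, satisfies `g'' + cot(g)(α² − (g')²) = 0` on
`(0, π/2)`, with `g(0) = 0`, `g(π/2) = π/2` and `g'(π/2) = b`, then for every `y ∈ [0, π/2]`,
`∫₀^{g(y)} du/√(1 − (1 − b²/α²)sin²u) = αy`. -/
theorem stmt16 (α b : ℝ) (hα : 0 < α) (hb : 0 < b) (g : ℝ → ℝ)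
    (hgc : ContinuousOn g (Set.Icc 0 (π / 2)))
    (hmap : Set.MapsTo g (Set.Icc 0 (π / 2)) (Set.Icc 0 (π / 2)))
    (hg : ∀ y ∈ Set.Ioo 0 (π / 2),
      DifferentiableAt ℝ g y ∧ DifferentiableAt ℝ (deriv g) y)
    (hgr : ∀ y ∈ Set.Ioo 0 (π / 2), 0 < g y ∧ g y < π)
    (hg' : ∀ y ∈ Set.Ioo 0 (π / 2), 0 < deriv g y)
    (hode : ∀ y ∈ Set.Ioo 0 (π / 2),
      deriv (deriv g) y + Real.cot (g y) * (α ^ 2 - (deriv g y) ^ 2) = 0)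
    (hg0 : g 0 = 0) (hgmid : g (π / 2) = π / 2) (hgb : deriv g (π / 2) = b) :
    ∀ y ∈ Set.Icc 0 (π / 2),
      ∫ u in (0 : ℝ)..(g y),
        1 / Real.sqrt (1 - (1 - b ^ 2 / α ^ 2) * Real.sin u ^ 2) = α * y := by
  have hπ : 0 < π / 2 := pi_div_two_pos
  set m : ℝ := 1 - b ^ 2 / α ^ 2 with hm_def
  -- positivity of 1 - m sin² u
  have hm : ∀ u : ℝ, 0 < 1 - m * Real.sin u ^ 2 := by
    intro u
    have hk : 0 < b ^ 2 / α ^ 2 := by positivity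
    have h0s : (0 : ℝ) ≤ Real.sin u ^ 2 := sq_nonneg _
    have hs1 : Real.sin u ^ 2 ≤ 1 := sin_sq_le_one u
    rw [hm_def]
    rcases lt_or_ge (Real.sin u ^ 2) 1 with h | h
    · nlinarith
    · have hs : Real.sin u ^ 2 = 1 := le_antisymm hs1 h
      rw [hs]; nlinarith
  -- sin (g y) positive on the open interval
  have hsin : ∀ y ∈ Set.Ioo 0 (π / 2), 0 < Real.sin (g y) := fun y hy =>
    Real.sin_pos_of_pos_of_lt_pi (hgr y hy).1 (hgr y hy).2
  -- The first integral E := ((g')² − α²)/sin²(g) is constant on (0, π/2)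
  set E : ℝ → ℝ := fun y => ((deriv g y) ^ 2 - α ^ 2) / Real.sin (g y) ^ 2 with hE_def
  have hEder : ∀ x ∈ Set.Ioo 0 (π / 2), HasDerivAt E 0 x := by
    intro x hx
    obtain ⟨hd1', hd2'⟩ := hg x hx
    set p := deriv g x
    set q := deriv (deriv g) x
    have hd1 : HasDerivAt g p x := hd1'.hasDerivAt
    have hd2 : HasDerivAt (deriv g) q x := hd2'.hasDerivAt
    have hs : 0 < Real.sin (g x) := hsin x hx
    have hnum : HasDerivAt (fun y => (deriv g y) ^ 2 - α ^ 2)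
        ((2 : ℕ) * p ^ 1 * q) x := by
      simpa using (hd2.pow 2).sub_const (α ^ 2)
    have hden : HasDerivAt (fun y => Real.sin (g y) ^ 2)
        ((2 : ℕ) * Real.sin (g x) ^ 1 * (Real.cos (g x) * p)) x := (hd1.sin.pow 2)
    have hne : Real.sin (g x) ^ 2 ≠ 0 := by positivity
    have hdiv := hnum.div hden hne
    have hq : q * Real.sin (g x) = Real.cos (g x) * (p ^ 2 - α ^ 2) := by
      have h := hode x hx
      rw [Real.cot_eq_cos_div_sin] at h
      field_simp [hs.ne'] at h
      linarith [h]
    refine hdiv.congr_deriv ?_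
    rw [div_eq_zero_iff]
    left
    push_cast
    linear_combination (2 * p * Real.sin (g x)) * hq
  -- constancy of E
  have hπ4 : π / 4 ∈ Set.Ioo 0 (π / 2) := ⟨by positivity, by linarith [pi_pos]⟩
  set E₀ : ℝ := E (π / 4) with hE0_def
  have hEconst : ∀ y ∈ Set.Ioo 0 (π / 2), E y = E₀ :=
    fun y hy => aux_const_of_deriv_zero hEder y hy (π / 4) hπ4
  -- formula for (g')²
  have hp2 : ∀ y ∈ Set.Ioo 0 (π / 2),
      (deriv g y) ^ 2 = α ^ 2 + E₀ * Real.sin (g y) ^ 2 := by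
    intro y hy
    have h := hEconst y hy
    have hs : Real.sin (g y) ≠ 0 := (hsin y hy).ne'
    rw [hE_def] at h
    field_simp at h
    linarith [h]
  -- limit of deriv g at π/2 from the left
  have hgtend : Filter.Tendsto g (nhdsWithin (π / 2) (Set.Iio (π / 2))) (nhds (π / 2)) := by
    have h1 : ContinuousWithinAt g (Set.Ioo 0 (π / 2)) (π / 2) :=
      (hgc.continuousWithinAt (Set.right_mem_Icc.mpr hπ.le)).mono Set.Ioo_subset_Icc_self
    have := h1.tendsto
    rw [hgmid] at this
    rwa [nhdsWithin_Ioo_eq_nhdsLT hπ] at this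
  have hIoo_mem : Set.Ioo 0 (π / 2) ∈ nhdsWithin (π / 2) (Set.Iio (π / 2)) :=
    Ioo_mem_nhdsLT_of_mem ⟨hπ, le_refl _⟩
  set L : ℝ := Real.sqrt (α ^ 2 + E₀) with hL_def
  have hdtend : Filter.Tendsto (deriv g) (nhdsWithin (π / 2) (Set.Iio (π / 2))) (nhds L) := by
    have h1 : Filter.Tendsto (fun y => Real.sqrt (α ^ 2 + E₀ * Real.sin (g y) ^ 2))
        (nhdsWithin (π / 2) (Set.Iio (π / 2))) (nhds L) := by
      have hc : Continuous (fun u : ℝ => Real.sqrt (α ^ 2 + E₀ * Real.sin u ^ 2)) :=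
        (continuous_const.add (continuous_const.mul (Real.continuous_sin.pow 2))).sqrt
      have := (hc.continuousAt (x := π / 2)).tendsto.comp hgtend
      simpa [Real.sin_pi_div_two, hL_def, Function.comp_def] using this
    refine h1.congr' ?_
    filter_upwards [hIoo_mem] with y hy
    have := hp2 y hy
    have hpos := hg' y hy
    rw [← this, Real.sqrt_sq hpos.le]
  -- g has derivative b at π/2 (since deriv g (π/2) = b ≠ 0)
  have hdiffb : HasDerivAt g b (π / 2) := by
    have hd : DifferentiableAt ℝ g (π / 2) := by
      by_contra h
      rw [deriv_zero_of_not_differentiableAt h] at hgb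
      linarith
    exact hgb ▸ hd.hasDerivAt
  have hLwithin : HasDerivWithinAt g L (Set.Iic (π / 2)) (π / 2) := by
    refine hasDerivWithinAt_Iic_of_tendsto_deriv (s := Set.Ioo 0 (π / 2)) ?_ ?_ hIoo_mem hdtend
    · exact fun x hx => (hg x hx).1.differentiableWithinAt
    · exact (hgc.continuousWithinAt (Set.right_mem_Icc.mpr hπ.le)).mono Set.Ioo_subset_Icc_self
  have hbL : b = L := by
    have h1 := hdiffb.hasDerivWithinAt (s := Set.Iic (π / 2)) |>.derivWithin
      (uniqueDiffOn_Iic (π / 2) _ Set.self_mem_Iic)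
    have h2 := hLwithin.derivWithin (uniqueDiffOn_Iic (π / 2) _ Set.self_mem_Iic)
    rw [← h1, ← h2]
  -- identify E₀ = b² − α²
  have hnn : 0 ≤ α ^ 2 + E₀ := by
    by_contra h
    push_neg at h
    have : L = 0 := Real.sqrt_eq_zero_of_nonpos h.le
    rw [← hbL] at this
    linarith
  have hE0 : E₀ = b ^ 2 - α ^ 2 := by
    have : b ^ 2 = α ^ 2 + E₀ := by
      rw [hbL, hL_def, Real.sq_sqrt hnn]
    linarith
  -- refined formula for (g')²
  have hp2' : ∀ y ∈ Set.Ioo 0 (π / 2),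
      (deriv g y) ^ 2 = α ^ 2 * (1 - m * Real.sin (g y) ^ 2) := by
    intro y hy
    rw [hp2 y hy, hE0, hm_def]
    field_simp
    ring
  -- the integrand and its primitive
  set f : ℝ → ℝ := fun u => 1 / Real.sqrt (1 - m * Real.sin u ^ 2) with hf_def
  have hfc : Continuous f := by
    refine continuous_const.div ?_ (fun u => (Real.sqrt_pos.mpr (hm u)).ne')
    exact (continuous_const.sub (continuous_const.mul (Real.continuous_sin.pow 2))).sqrt
  set F : ℝ → ℝ := fun t => ∫ u in (0:ℝ)..t, f u with hF_def
  have hFder : ∀ t : ℝ, HasDerivAt F (f t) t := fun t =>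
    (hfc.integral_hasStrictDerivAt 0 t).hasDerivAt
  have hFc : Continuous F := by
    refine continuous_iff_continuousAt.mpr fun t => (hFder t).differentiableAt.continuousAt
  -- h := F ∘ g − α·id has zero derivative on (0, π/2)
  set h : ℝ → ℝ := fun y => F (g y) - α * y with hh_def
  have hhder : ∀ x ∈ Set.Ioo 0 (π / 2), HasDerivAt h 0 x := by
    intro x hx
    have hd1 : HasDerivAt g (deriv g x) x := (hg x hx).1.hasDerivAt
    have hcomp : HasDerivAt (fun y => F (g y)) (f (g x) * deriv g x) x :=
      (hFder (g x)).comp x hd1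
    have hde : HasDerivAt h (f (g x) * deriv g x - α * 1) x :=
      hcomp.sub ((hasDerivAt_id x).const_mul α)
    have hval : f (g x) * deriv g x = α := by
      have hpos := hg' x hx
      have hroot : 0 < 1 - m * Real.sin (g x) ^ 2 := hm (g x)
      have hpval : deriv g x = α * Real.sqrt (1 - m * Real.sin (g x) ^ 2) := by
        have h1 : (deriv g x) ^ 2 = (α * Real.sqrt (1 - m * Real.sin (g x) ^ 2)) ^ 2 := by
          rw [mul_pow, Real.sq_sqrt hroot.le]
          exact hp2' x hx
        have h2 : 0 < α * Real.sqrt (1 - m * Real.sin (g x) ^ 2) := by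
          positivity
        nlinarith
      rw [hf_def, hpval]
      have hsq : Real.sqrt (1 - m * Real.sin (g x) ^ 2) ≠ 0 :=
        (Real.sqrt_pos.mpr hroot).ne'
      field_simp
    rw [hval] at hde
    simpa using hde
  -- h is constant on (0, π/2)
  set k : ℝ := h (π / 4) with hk_def
  have hhconst : ∀ y ∈ Set.Ioo 0 (π / 2), h y = k :=
    fun y hy => aux_const_of_deriv_zero hhder y hy (π / 4) hπ4
  -- continuity of h on [0, π/2]
  have hhc : ContinuousOn h (Set.Icc 0 (π / 2)) := by
    refine ((hFc.comp_continuousOn hgc).sub ?_)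
    exact (continuous_const.mul continuous_id).continuousOn
  -- h 0 = k by taking limits
  have hlim : ∀ y₀ ∈ Set.Icc 0 (π / 2), y₀ ∈ closure (Set.Ioo 0 (π / 2)) → h y₀ = k := by
    intro y₀ hy₀ hcl
    have hne : (nhdsWithin y₀ (Set.Ioo 0 (π / 2))).NeBot :=
      mem_closure_iff_nhdsWithin_neBot.mp hcl
    have h1 : Filter.Tendsto h (nhdsWithin y₀ (Set.Ioo 0 (π / 2))) (nhds (h y₀)) :=
      ((hhc.continuousWithinAt hy₀).mono Set.Ioo_subset_Icc_self).tendsto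
    have h2 : Filter.Tendsto h (nhdsWithin y₀ (Set.Ioo 0 (π / 2))) (nhds k) := by
      refine Filter.Tendsto.congr' ?_ tendsto_const_nhds
      filter_upwards [self_mem_nhdsWithin] with y hy
      exact (hhconst y hy).symm
    exact tendsto_nhds_unique h1 h2
  have hclosure : closure (Set.Ioo 0 (π / 2)) = Set.Icc 0 (π / 2) := closure_Ioo hπ.ne
  have hh0 : h 0 = k := hlim 0 (Set.left_mem_Icc.mpr hπ.le)
    (by rw [hclosure]; exact Set.left_mem_Icc.mpr hπ.le)
  have hF0 : h 0 = 0 := by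
    simp [hh_def, hg0, hF_def, intervalIntegral.integral_same]
  have hk0 : k = 0 := by rw [← hh0, hF0]
  -- conclusion
  intro y hy
  have hhy : h y = 0 := by
    rw [← hk0]
    exact hlim y hy (by rw [hclosure]; exact hy)
  have : F (g y) = α * y := by
    have h2 : F (g y) - α * y = 0 := hhy
    linarith
  simpa [hF_def, hf_def] using this
end

section
/- Let α > 0, b > 0 satisfy ∫₀^{π/2} du/√(1 − (1 − b²/α²)·sin²u) = απ/2. Then there exists a strictly increasing continuous function g : [0, π] → [0, π], twice differentiable on (0, π), such that ∫₀^{g(y)} du/√(1 − (1 − b²/α²)·sin²u) = αy for all y ∈ [0, π]; this g satisfies g'' + cot(g)(α² − (g')²) = 0 on (0, π), g(0) = 0, g(π/2) = π/2, g'(π/2) = b, and g(π) = π. -/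
open Real Filter

namespace Stmt17Aux

noncomputable def f (m : ℝ) : ℝ → ℝ := fun u => 1 / Real.sqrt (1 - m * Real.sin u ^ 2)

noncomputable def F (m : ℝ) : ℝ → ℝ := fun x => ∫ u in (0:ℝ)..x, f m u

variable {m : ℝ} (hpos : ∀ u : ℝ, 0 < 1 - m * Real.sin u ^ 2)
include hpos

theorem f_pos (u : ℝ) : 0 < f m u :=
  one_div_pos.2 (Real.sqrt_pos.2 (hpos u))

theorem f_cont : Continuous (f m) := by
  have h : Continuous fun u : ℝ => Real.sqrt (1 - m * Real.sin u ^ 2) :=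
    Real.continuous_sqrt.comp (by continuity)
  exact continuous_const.div h fun u => ne_of_gt (Real.sqrt_pos.2 (hpos u))

theorem F_hasDerivAt (x : ℝ) : HasDerivAt (F m) (f m x) x :=
  intervalIntegral.integral_hasDerivAt_right ((f_cont hpos).intervalIntegrable 0 x)
    ((f_cont hpos).stronglyMeasurableAtFilter _ _) (f_cont hpos).continuousAt

theorem F_mono : StrictMono (F m) :=
  strictMono_of_deriv_pos fun x => by
    rw [(F_hasDerivAt hpos x).deriv]; exact f_pos hpos x

theorem f_lower (u : ℝ) : (Real.sqrt (1 + |m|))⁻¹ ≤ f m u := by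
  have h1 : 1 - m * Real.sin u ^ 2 ≤ 1 + |m| := by
    nlinarith [Real.sin_sq_le_one u, sq_nonneg (Real.sin u), abs_nonneg m,
      mul_le_mul_of_nonneg_right (neg_abs_le m) (sq_nonneg (Real.sin u)),
      mul_le_mul_of_nonneg_left (Real.sin_sq_le_one u) (abs_nonneg m)]
  have h2 : Real.sqrt (1 - m * Real.sin u ^ 2) ≤ Real.sqrt (1 + |m|) :=
    Real.sqrt_le_sqrt h1
  have h3 : 0 < Real.sqrt (1 - m * Real.sin u ^ 2) := Real.sqrt_pos.2 (hpos u)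
  rw [f, one_div]
  exact inv_anti₀ h3 h2

theorem F_surj : Function.Surjective (F m) := by
  set c : ℝ := (Real.sqrt (1 + |m|))⁻¹ with hc
  have hcpos : 0 < c := inv_pos.2 (Real.sqrt_pos.2 (by positivity))
  have hcont := f_cont hpos
  have hlow : ∀ x : ℝ, 0 ≤ x → c * x ≤ F m x := by
    intro x hx
    have h := intervalIntegral.integral_mono_on (μ := MeasureTheory.volume) hx
      (intervalIntegrable_const (c := c)) (hcont.intervalIntegrable 0 x)
      (fun u _ => f_lower hpos u)
    simpa [mul_comm, F] using h
  have hupp : ∀ x : ℝ, x ≤ 0 → F m x ≤ c * x := by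
    intro x hx
    have h := intervalIntegral.integral_mono_on (μ := MeasureTheory.volume) hx
      (intervalIntegrable_const (c := c)) (hcont.intervalIntegrable x 0)
      (fun u _ => f_lower hpos u)
    have hsym : F m x = - ∫ u in x..(0:ℝ), f m u := by
      rw [F, intervalIntegral.integral_symm]
    rw [hsym]
    simp only [intervalIntegral.integral_const, smul_eq_mul, zero_sub] at h
    linarith
  have htop : Tendsto (F m) atTop atTop := by
    apply tendsto_atTop_mono' atTop
      (((eventually_ge_atTop (0:ℝ)).mono fun x hx => hlow x hx))
    exact Tendsto.const_mul_atTop hcpos tendsto_id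
  have hbot : Tendsto (F m) atBot atBot := by
    apply tendsto_atBot_mono' atBot
      (((eventually_le_atBot (0:ℝ)).mono fun x hx => hupp x hx))
    exact Tendsto.const_mul_atBot hcpos tendsto_id
  have hFcont : Continuous (F m) :=
    continuous_iff_continuousAt.2 fun x => (F_hasDerivAt hpos x).continuousAt
  exact hFcont.surjective htop hbot

theorem F_pi_sub : F m π = 2 * F m (π / 2) := by
  have hadd : F m (π/2) + (∫ u in (π/2)..π, f m u) = F m π :=
    intervalIntegral.integral_add_adjacent_intervals
      ((f_cont hpos).intervalIntegrable 0 (π/2)) ((f_cont hpos).intervalIntegrable (π/2) π)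
  have hcomp : (∫ u in (0:ℝ)..(π/2), f m (π - u)) = ∫ u in (π/2)..π, f m u := by
    rw [intervalIntegral.integral_comp_sub_left (f m) π]
    have h2 : π - π / 2 = π / 2 := by ring
    rw [h2, sub_zero]
  have hsame : (∫ u in (0:ℝ)..(π/2), f m (π - u)) = F m (π/2) := by
    rw [F]
    congr 1
    ext u
    rw [f, f, Real.sin_pi_sub]
  rw [← hadd, ← hcomp, hsame]; ring

end Stmt17Aux


open Real

/-- If `α > 0`, `b > 0` satisfy `∫₀^{π/2} du/√(1 − (1 − b²/α²)sin²u) = απ/2`,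
then there is a strictly increasing continuous `g : [0, π] → [0, π]`, twice differentiable on
`(0, π)`, with `∫₀^{g(y)} du/√(1 − (1 − b²/α²)sin²u) = αy` on `[0, π]`, satisfying
`g'' + cot(g)(α² − (g')²) = 0` on `(0, π)`, `g(0) = 0`, `g(π/2) = π/2`, `g'(π/2) = b` and
`g(π) = π`. -/
theorem stmt17 (α b : ℝ) (hα : 0 < α) (hb : 0 < b)
    (hK : (∫ u in (0 : ℝ)..(π / 2),
      1 / Real.sqrt (1 - (1 - b ^ 2 / α ^ 2) * Real.sin u ^ 2)) = α * π / 2) :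
    ∃ g : ℝ → ℝ,
      StrictMonoOn g (Set.Icc 0 π) ∧
      ContinuousOn g (Set.Icc 0 π) ∧
      Set.MapsTo g (Set.Icc 0 π) (Set.Icc 0 π) ∧
      (∀ y ∈ Set.Ioo 0 π, DifferentiableAt ℝ g y ∧ DifferentiableAt ℝ (deriv g) y) ∧
      (∀ y ∈ Set.Icc 0 π,
        ∫ u in (0 : ℝ)..(g y),
          1 / Real.sqrt (1 - (1 - b ^ 2 / α ^ 2) * Real.sin u ^ 2) = α * y) ∧
      (∀ y ∈ Set.Ioo 0 π,
        deriv (deriv g) y + Real.cot (g y) * (α ^ 2 - (deriv g y) ^ 2) = 0) ∧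
      g 0 = 0 ∧ g (π / 2) = π / 2 ∧ deriv g (π / 2) = b ∧ g π = π := by
  set m : ℝ := 1 - b ^ 2 / α ^ 2 with hm
  have hpos : ∀ u : ℝ, 0 < 1 - m * Real.sin u ^ 2 := by
    intro u
    have hk : 0 < b ^ 2 / α ^ 2 := by positivity
    have h0 : 0 ≤ Real.sin u ^ 2 := sq_nonneg _
    have h1 : Real.sin u ^ 2 ≤ 1 := Real.sin_sq_le_one u
    rw [hm]
    rcases le_total (b ^ 2 / α ^ 2) 1 with h | h
    · nlinarith
    · nlinarith
  have hmono := Stmt17Aux.F_mono hpos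
  have hsurj := Stmt17Aux.F_surj hpos
  set e : ℝ ≃o ℝ := StrictMono.orderIsoOfSurjective _ hmono hsurj with he
  have hecoe : ∀ x, e x = Stmt17Aux.F m x := fun x => by
    rw [he]; exact congrFun (StrictMono.coe_orderIsoOfSurjective _ hmono hsurj) x
  set g : ℝ → ℝ := fun y => e.symm (α * y) with hg
  have hFg : ∀ y, Stmt17Aux.F m (g y) = α * y := fun y => by
    rw [hg, ← hecoe]; exact e.apply_symm_apply _
  have hgF : ∀ x y : ℝ, Stmt17Aux.F m x = α * y → g y = x := by
    intro x y h
    exact hmono.injective (by rw [hFg y, h])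
  have hFhalf : Stmt17Aux.F m (π / 2) = α * (π / 2) := by
    have : Stmt17Aux.F m (π / 2)
        = ∫ u in (0 : ℝ)..(π / 2),
          1 / Real.sqrt (1 - (1 - b ^ 2 / α ^ 2) * Real.sin u ^ 2) := by
      rw [hm]; rfl
    rw [this, hK]; ring
  have hF0 : Stmt17Aux.F m 0 = α * 0 := by
    simp [Stmt17Aux.F]
  have hFpi : Stmt17Aux.F m π = α * π := by
    rw [Stmt17Aux.F_pi_sub hpos, hFhalf]; ring
  have g0 : g 0 = 0 := hgF 0 0 hF0
  have ghalf : g (π / 2) = π / 2 := hgF (π / 2) (π / 2) hFhalf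
  have gpi : g π = π := hgF π π hFpi
  have hgmono : StrictMono g := fun x y h =>
    e.symm.strictMono (mul_lt_mul_of_pos_left h hα)
  have hgc : Continuous g :=
    (OrderIso.continuous e.symm).comp (continuous_const.mul continuous_id)
  set D : ℝ → ℝ := fun y => α * Real.sqrt (1 - m * Real.sin (g y) ^ 2) with hD
  have hgD : ∀ y, HasDerivAt g (D y) y := by
    intro y
    have hfd : HasDerivAt (Stmt17Aux.F m) (Stmt17Aux.f m (g y)) (g y) :=
      Stmt17Aux.F_hasDerivAt hpos _
    have hinv : HasDerivAt (⇑e.symm) ((Stmt17Aux.f m (g y))⁻¹) (α * y) := by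
      refine HasDerivAt.of_local_left_inverse (OrderIso.continuous e.symm).continuousAt
        hfd (ne_of_gt (Stmt17Aux.f_pos hpos _))
        (Filter.Eventually.of_forall fun z => ?_)
      rw [← hecoe]; exact e.apply_symm_apply z
    have hlin : HasDerivAt (fun t : ℝ => α * t) α y := by
      simpa using (hasDerivAt_id y).const_mul α
    have hcomp := hinv.comp y hlin
    have hval : (Stmt17Aux.f m (g y))⁻¹ * α = D y := by
      rw [Stmt17Aux.f, hD, one_div, inv_inv]; ring
    rw [← hval]
    exact hcomp
  have hderiv : deriv g = D := funext fun y => (hgD y).deriv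
  have hDd : ∀ y, HasDerivAt D
      (α * (1 / (2 * Real.sqrt (1 - m * Real.sin (g y) ^ 2)) *
        (-(m * (2 * Real.sin (g y) ^ 1 * (Real.cos (g y) * D y)))))) y := by
    intro y
    have h1 : HasDerivAt (fun t => Real.sin (g t)) (Real.cos (g y) * D y) y :=
      (Real.hasDerivAt_sin (g y)).comp y (hgD y)
    have h2 := h1.pow 2
    have h3 : HasDerivAt (fun t => 1 - m * Real.sin (g t) ^ 2)
        (-(m * (2 * Real.sin (g y) ^ 1 * (Real.cos (g y) * D y)))) y := by
      simpa using (h2.const_mul m).const_sub 1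
    have h4 := (Real.hasDerivAt_sqrt (ne_of_gt (hpos (g y)))).comp y h3
    simpa [hD] using h4.const_mul α
  refine ⟨g, hgmono.strictMonoOn _, hgc.continuousOn, ?_, ?_, ?_, ?_, g0, ghalf, ?_, gpi⟩
  · intro y hy
    constructor
    · rw [← g0]; exact hgmono.monotone hy.1
    · rw [← gpi]; exact hgmono.monotone hy.2
  · intro y _
    exact ⟨(hgD y).differentiableAt, hderiv ▸ (hDd y).differentiableAt⟩
  · intro y _
    have := hFg y
    rw [hm] at this
    exact this
  · intro y hy
    have hgy : g y ∈ Set.Ioo 0 π := ⟨g0 ▸ hgmono hy.1, gpi ▸ hgmono hy.2⟩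
    have hsin : 0 < Real.sin (g y) := Real.sin_pos_of_pos_of_lt_pi hgy.1 hgy.2
    have hs : 0 < 1 - m * Real.sin (g y) ^ 2 := hpos (g y)
    set r : ℝ := Real.sqrt (1 - m * Real.sin (g y) ^ 2) with hr
    have hrpos : 0 < r := Real.sqrt_pos.2 hs
    have hr2 : r ^ 2 = 1 - m * Real.sin (g y) ^ 2 := Real.sq_sqrt hs.le
    have hdd : deriv (deriv g) y
        = α * (1 / (2 * r) * (-(m * (2 * Real.sin (g y) ^ 1 * (Real.cos (g y) * D y))))) := by
      rw [hderiv]; exact (hDd y).deriv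
    rw [hdd, hderiv, Real.cot_eq_cos_div_sin]
    have hDy : D y = α * r := by rw [hD]
    rw [hDy]
    have h2r : (2 * r)⁻¹ * (2 * r) = 1 := inv_mul_cancel₀ (by positivity)
    have hs1 : (Real.sin (g y))⁻¹ * Real.sin (g y) = 1 := inv_mul_cancel₀ hsin.ne'
    linear_combination (-α ^ 2 * Real.cos (g y) * (Real.sin (g y))⁻¹) * hr2
      + (α ^ 2 * m * Real.cos (g y) * Real.sin (g y)) * hs1
      - (α ^ 2 * m * Real.sin (g y) * Real.cos (g y)) * h2r
  · rw [hderiv]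
    show α * Real.sqrt (1 - m * Real.sin (g (π / 2)) ^ 2) = b
    have h1 : (1 : ℝ) - m * Real.sin (g (π / 2)) ^ 2 = (b / α) ^ 2 := by
      rw [ghalf, Real.sin_pi_div_two, hm]; field_simp; ring
    rw [h1, Real.sqrt_sq (by positivity : (0:ℝ) ≤ b / α)]
    field_simp
end
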